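/- arXiv:1401.5281 — 3 statements merged into one kernel-verified Lean document; each statement's English description precedes it below -/
import Mathlib

section
/- Fix 0 ≤ t < T and y ∈ ℝ^N. If (x,u) is a feasible control pair for (t,y) that minimizes ∫_t^T F(x(s),u(s)) ds among all feasible control pairs for (t,y), then the path x (which is admissible with x' (s) = f(x(s),u(s))) satisfies ∫_t^T φ(x(s), x'(s)) ds ≤ ∫_t^T φ(z(s), z'(s)) ds for every admissible path z on [t,T] starting at y, where the integrals are taken with values in (−∞, +∞]. -/
open MeasureTheory Set

noncomputable section

/-- An admissible path on `[a,b]` starting at `y`. -/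
def Admissible {N : ℕ} (a b : ℝ) (y : EuclideanSpace ℝ (Fin N))
    (z w : ℝ → EuclideanSpace ℝ (Fin N)) : Prop :=
  IntervalIntegrable w volume a b ∧
  ∀ s ∈ Icc a b, z s = y + ∫ r in a..s, w r

/-- A feasible control pair for `(t,y)`. -/
def FeasiblePair {N m : ℕ} (T : ℝ) (K : Set (EuclideanSpace ℝ (Fin m)))
    (f : EuclideanSpace ℝ (Fin N) → EuclideanSpace ℝ (Fin m) → EuclideanSpace ℝ (Fin N))
    (t : ℝ) (y : EuclideanSpace ℝ (Fin N))
    (x : ℝ → EuclideanSpace ℝ (Fin N)) (u : ℝ → EuclideanSpace ℝ (Fin m)) : Prop :=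
  Measurable u ∧ (∀ s ∈ Icc t T, u s ∈ K) ∧
  IntervalIntegrable (fun r => f (x r) (u r)) volume t T ∧
  ∀ s ∈ Icc t T, x s = y + ∫ r in t..s, f (x r) (u r)

/-- The reformulated integrand `φ(x,ξ) = inf {F(x,u) : u ∈ K, f(x,u) = ξ}`, with
value `+∞` (in `EReal`) when no such `u` exists. -/
def phiRe {N m : ℕ} (K : Set (EuclideanSpace ℝ (Fin m)))
    (F : EuclideanSpace ℝ (Fin N) → EuclideanSpace ℝ (Fin m) → ℝ)
    (f : EuclideanSpace ℝ (Fin N) → EuclideanSpace ℝ (Fin m) → EuclideanSpace ℝ (Fin N))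
    (x ξ : EuclideanSpace ℝ (Fin N)) : EReal :=
  sInf ((fun u => ((F x u : ℝ) : EReal)) '' {u | u ∈ K ∧ f x u = ξ})

open scoped Classical in
/-- The variational cost `∫_t^T φ(z,z')` with values in `(-∞,+∞]`: it is the real
integral when `φ(z,z')` is finite a.e. on `(t,T)` and integrable, and `+∞` otherwise
(legitimate since `F`, hence `φ`, is bounded below). -/
def Jphi {N m : ℕ} (K : Set (EuclideanSpace ℝ (Fin m)))
    (F : EuclideanSpace ℝ (Fin N) → EuclideanSpace ℝ (Fin m) → ℝ)
    (f : EuclideanSpace ℝ (Fin N) → EuclideanSpace ℝ (Fin m) → EuclideanSpace ℝ (Fin N))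
    (t T : ℝ) (z w : ℝ → EuclideanSpace ℝ (Fin N)) : EReal :=
  if (∀ᵐ s ∂(volume.restrict (Ioo t T)), ∃ u ∈ K, f (z s) u = w s) ∧
      IntervalIntegrable (fun s => (phiRe K F f (z s) (w s)).toReal) volume t T
  then ((∫ s in t..T, (phiRe K F f (z s) (w s)).toReal : ℝ) : EReal)
  else ⊤



lemma isClosed_exists_of_isCompact {X Y : Type*} [TopologicalSpace X] [TopologicalSpace Y]
    {K' : Set Y} (hK : IsCompact K') {P : Set (X × Y)} (hP : IsClosed P) :
    IsClosed {x : X | ∃ u ∈ K', (x, u) ∈ P} := by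
  haveI : CompactSpace K' := isCompact_iff_compactSpace.mp hK
  have hmap : IsClosedMap (Prod.snd : K' × X → X) := isClosedMap_snd_of_compactSpace
  have hA : IsClosed {q : K' × X | (q.2, (q.1 : Y)) ∈ P} :=
    hP.preimage (continuous_snd.prodMk (continuous_subtype_val.comp continuous_fst))
  have := hmap _ hA
  convert this using 1
  ext x
  constructor
  · rintro ⟨u, hu, hx⟩
    exact ⟨(⟨u, hu⟩, x), hx, rfl⟩
  · rintro ⟨⟨u, x'⟩, hq, rfl⟩
    exact ⟨u, u.2, hq⟩

section Aux

variable {N m : ℕ} {K : Set (EuclideanSpace ℝ (Fin m))}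
  {F : EuclideanSpace ℝ (Fin N) → EuclideanSpace ℝ (Fin m) → ℝ}
  {f : EuclideanSpace ℝ (Fin N) → EuclideanSpace ℝ (Fin m) → EuclideanSpace ℝ (Fin N)}
  {c : ℝ}

lemma phiRe_lb (hc : ∀ x u, c ≤ F x u) (x ξ : EuclideanSpace ℝ (Fin N)) :
    (c : EReal) ≤ phiRe K F f x ξ := by
  refine le_sInf ?_
  rintro b ⟨u, -, rfl⟩
  exact EReal.coe_le_coe_iff.2 (hc x u)

lemma phiRe_le {u : EuclideanSpace ℝ (Fin m)} (hu : u ∈ K) {x ξ : EuclideanSpace ℝ (Fin N)}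
    (hfu : f x u = ξ) : phiRe K F f x ξ ≤ ((F x u : ℝ) : EReal) :=
  sInf_le ⟨u, ⟨hu, hfu⟩, rfl⟩

lemma phiRe_attained (hK : IsCompact K)
    (hFc : Continuous fun q : EuclideanSpace ℝ (Fin N) × EuclideanSpace ℝ (Fin m) => F q.1 q.2)
    (hfc : Continuous fun q : EuclideanSpace ℝ (Fin N) × EuclideanSpace ℝ (Fin m) => f q.1 q.2)
    {x ξ : EuclideanSpace ℝ (Fin N)} (hne : ∃ u ∈ K, f x u = ξ) :
    ∃ u ∈ K, f x u = ξ ∧ phiRe K F f x ξ = ((F x u : ℝ) : EReal) := by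
  have hfx : Continuous fun u => f x u := hfc.comp (continuous_const.prodMk continuous_id)
  have hFx : Continuous fun u => F x u := hFc.comp (continuous_const.prodMk continuous_id)
  have hS : IsCompact {u | u ∈ K ∧ f x u = ξ} := by
    have : {u | u ∈ K ∧ f x u = ξ} = K ∩ {u | f x u = ξ} := rfl
    rw [this]
    exact hK.inter_right (isClosed_eq hfx continuous_const)
  obtain ⟨u, hu, hfu⟩ := hne
  obtain ⟨u₀, hu₀, hmin⟩ := hS.exists_isMinOn ⟨u, hu, hfu⟩ hFx.continuousOn
  refine ⟨u₀, hu₀.1, hu₀.2, le_antisymm (phiRe_le hu₀.1 hu₀.2) ?_⟩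
  refine le_sInf ?_
  rintro b ⟨v, hv, rfl⟩
  exact EReal.coe_le_coe_iff.2 (hmin hv)

lemma phiRe_ne_top {x ξ : EuclideanSpace ℝ (Fin N)} (hne : ∃ u ∈ K, f x u = ξ) :
    phiRe K F f x ξ ≠ ⊤ := by
  obtain ⟨u, hu, hfu⟩ := hne
  exact ne_top_of_le_ne_top (EReal.coe_ne_top _) (phiRe_le hu hfu)

lemma phiRe_ne_bot (hc : ∀ x u, c ≤ F x u) (x ξ : EuclideanSpace ℝ (Fin N)) :
    phiRe K F f x ξ ≠ ⊥ :=
  ne_bot_of_le_ne_bot (EReal.coe_ne_bot c) (phiRe_lb hc x ξ)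

lemma phiRe_toReal_le (hc : ∀ x u, c ≤ F x u) {u : EuclideanSpace ℝ (Fin m)} (hu : u ∈ K)
    {x ξ : EuclideanSpace ℝ (Fin N)} (hfu : f x u = ξ) :
    (phiRe K F f x ξ).toReal ≤ F x u := by
  have h := EReal.toReal_le_toReal (phiRe_le (F := F) hu hfu)
    (phiRe_ne_bot hc x ξ) (EReal.coe_ne_top _)
  simpa using h

lemma phiRe_toReal_eq (hK : IsCompact K)
    (hFc : Continuous fun q : EuclideanSpace ℝ (Fin N) × EuclideanSpace ℝ (Fin m) => F q.1 q.2)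
    (hfc : Continuous fun q : EuclideanSpace ℝ (Fin N) × EuclideanSpace ℝ (Fin m) => f q.1 q.2)
    {x ξ : EuclideanSpace ℝ (Fin N)} (hne : ∃ u ∈ K, f x u = ξ) :
    ∃ u ∈ K, f x u = ξ ∧ (phiRe K F f x ξ).toReal = F x u := by
  obtain ⟨u, hu, hfu, heq⟩ := phiRe_attained hK hFc hfc hne
  exact ⟨u, hu, hfu, by rw [heq]; simp⟩

lemma lowerSemicontinuous_phiRe (hK : IsCompact K)
    (hFc : Continuous fun q : EuclideanSpace ℝ (Fin N) × EuclideanSpace ℝ (Fin m) => F q.1 q.2)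
    (hfc : Continuous fun q : EuclideanSpace ℝ (Fin N) × EuclideanSpace ℝ (Fin m) => f q.1 q.2) :
    LowerSemicontinuous fun p : EuclideanSpace ℝ (Fin N) × EuclideanSpace ℝ (Fin N) =>
      phiRe K F f p.1 p.2 := by
  rw [lowerSemicontinuous_iff_isClosed_preimage]
  intro y
  rcases eq_or_ne y ⊤ with rfl | hy
  · convert isClosed_univ
    ext p; simp [le_top]
  · have hset : (fun p : EuclideanSpace ℝ (Fin N) × EuclideanSpace ℝ (Fin N) =>
        phiRe K F f p.1 p.2) ⁻¹' Iic y =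
        {p | ∃ u ∈ K, (p, u) ∈ {q : (EuclideanSpace ℝ (Fin N) × EuclideanSpace ℝ (Fin N)) ×
          EuclideanSpace ℝ (Fin m) | f q.1.1 u = q.1.2 ∧ ((F q.1.1 u : ℝ) : EReal) ≤ y}} := by
      ext p
      simp only [mem_preimage, mem_Iic, mem_setOf_eq]
      constructor
      · intro hle
        have hne : ∃ u ∈ K, f p.1 u = p.2 := by
          by_contra hcon
          have hemp : {u | u ∈ K ∧ f p.1 u = p.2} = ∅ := by
            ext u; simp only [mem_setOf_eq, mem_empty_iff_false, iff_false]
            intro h; exact hcon ⟨u, h.1, h.2⟩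
          have htop : phiRe K F f p.1 p.2 = ⊤ := by
            unfold phiRe; rw [hemp]; simp
          rw [htop] at hle
          exact hy (top_le_iff.1 hle)
        obtain ⟨u, hu, hfu, heq⟩ := phiRe_attained hK hFc hfc hne
        exact ⟨u, hu, hfu, heq ▸ hle⟩
      · rintro ⟨u, hu, hfu, hFu⟩
        exact le_trans (phiRe_le hu hfu) hFu
    rw [hset]
    have hP : IsClosed {q : (EuclideanSpace ℝ (Fin N) × EuclideanSpace ℝ (Fin N)) ×
        EuclideanSpace ℝ (Fin m) | f q.1.1 q.2 = q.1.2 ∧ ((F q.1.1 q.2 : ℝ) : EReal) ≤ y} := by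
      refine IsClosed.inter ?_ ?_
      · exact isClosed_eq (hfc.comp ((continuous_fst.comp continuous_fst).prodMk continuous_snd))
          (continuous_snd.comp continuous_fst)
      · exact IsClosed.preimage (continuous_coe_real_ereal.comp
          (hFc.comp ((continuous_fst.comp continuous_fst).prodMk continuous_snd))) isClosed_Iic
    exact isClosed_exists_of_isCompact hK hP

lemma measurable_phiRe (hK : IsCompact K)
    (hFc : Continuous fun q : EuclideanSpace ℝ (Fin N) × EuclideanSpace ℝ (Fin m) => F q.1 q.2)
    (hfc : Continuous fun q : EuclideanSpace ℝ (Fin N) × EuclideanSpace ℝ (Fin m) => f q.1 q.2) :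
    Measurable fun p : EuclideanSpace ℝ (Fin N) × EuclideanSpace ℝ (Fin N) =>
      phiRe K F f p.1 p.2 :=
  (lowerSemicontinuous_phiRe hK hFc hfc).measurable

end Aux

section Sel

variable {N m : ℕ}

/-- Nonemptiness locus of the constraint set. -/
def NEset (K : Set (EuclideanSpace ℝ (Fin m)))
    (f : EuclideanSpace ℝ (Fin N) → EuclideanSpace ℝ (Fin m) → EuclideanSpace ℝ (Fin N)) :
    Set (EuclideanSpace ℝ (Fin N) × EuclideanSpace ℝ (Fin N)) :=
  {p | ∃ u ∈ K, f p.1 u = p.2}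

lemma isClosed_NEset {K : Set (EuclideanSpace ℝ (Fin m))} (hK : IsCompact K)
    {f : EuclideanSpace ℝ (Fin N) → EuclideanSpace ℝ (Fin m) → EuclideanSpace ℝ (Fin N)}
    (hfc : Continuous fun q : EuclideanSpace ℝ (Fin N) × EuclideanSpace ℝ (Fin m) => f q.1 q.2) :
    IsClosed (NEset K f) := by
  have hP : IsClosed {q : (EuclideanSpace ℝ (Fin N) × EuclideanSpace ℝ (Fin N)) ×
      EuclideanSpace ℝ (Fin m) | f q.1.1 q.2 = q.1.2} :=
    isClosed_eq (hfc.comp ((continuous_fst.comp continuous_fst).prodMk continuous_snd))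
      (continuous_snd.comp continuous_fst)
  exact isClosed_exists_of_isCompact hK hP

variable (K : Set (EuclideanSpace ℝ (Fin m)))
  (F : EuclideanSpace ℝ (Fin N) → EuclideanSpace ℝ (Fin m) → ℝ)
  (f : EuclideanSpace ℝ (Fin N) → EuclideanSpace ℝ (Fin m) → EuclideanSpace ℝ (Fin N))

/-- Iterated lexicographic argmin sets. -/
def Gsel : ℕ → (EuclideanSpace ℝ (Fin N) × EuclideanSpace ℝ (Fin N)) →
    Set (EuclideanSpace ℝ (Fin m))
  | 0, p => {u | u ∈ K ∧ f p.1 u = p.2 ∧ F p.1 u ≤ (phiRe K F f p.1 p.2).toReal}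
  | (i + 1), p =>
    if h : i < m then
      {u ∈ Gsel i p | u ⟨i, h⟩ = sInf ((fun v : EuclideanSpace ℝ (Fin m) => v ⟨i, h⟩) ''
        Gsel i p)}
    else Gsel i p

def qsel (j : Fin m) (p : EuclideanSpace ℝ (Fin N) × EuclideanSpace ℝ (Fin N)) : ℝ :=
  sInf ((fun v : EuclideanSpace ℝ (Fin m) => v j) '' Gsel K F f (j : ℕ) p)

def selK (p : EuclideanSpace ℝ (Fin N) × EuclideanSpace ℝ (Fin N)) :
    EuclideanSpace ℝ (Fin m) :=
  (EuclideanSpace.equiv (Fin m) ℝ).symm fun j => qsel K F f j p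

variable {K F f}

lemma Gsel_zero (p : EuclideanSpace ℝ (Fin N) × EuclideanSpace ℝ (Fin N)) :
    Gsel K F f 0 p = {u | u ∈ K ∧ f p.1 u = p.2 ∧ F p.1 u ≤ (phiRe K F f p.1 p.2).toReal} := rfl

lemma Gsel_succ_pos {i : ℕ} (h : i < m) (p : EuclideanSpace ℝ (Fin N) × EuclideanSpace ℝ (Fin N)) :
    Gsel K F f (i + 1) p = {u ∈ Gsel K F f i p |
      u ⟨i, h⟩ = sInf ((fun v : EuclideanSpace ℝ (Fin m) => v ⟨i, h⟩) '' Gsel K F f i p)} := by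
  rw [Gsel, dif_pos h]

lemma Gsel_succ_neg {i : ℕ} (h : ¬ i < m)
    (p : EuclideanSpace ℝ (Fin N) × EuclideanSpace ℝ (Fin N)) :
    Gsel K F f (i + 1) p = Gsel K F f i p := by
  rw [Gsel, dif_neg h]

lemma Gsel_succ_subset (i : ℕ) (p : EuclideanSpace ℝ (Fin N) × EuclideanSpace ℝ (Fin N)) :
    Gsel K F f (i + 1) p ⊆ Gsel K F f i p := by
  by_cases h : i < m
  · rw [Gsel_succ_pos h]; exact sep_subset _ _
  · rw [Gsel_succ_neg h]

lemma Gsel_subset_zero (i : ℕ) (p : EuclideanSpace ℝ (Fin N) × EuclideanSpace ℝ (Fin N)) :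
    Gsel K F f i p ⊆ Gsel K F f 0 p := by
  induction i with
  | zero => exact subset_rfl
  | succ i ih => exact (Gsel_succ_subset i p).trans ih

lemma Gsel_empty {p : EuclideanSpace ℝ (Fin N) × EuclideanSpace ℝ (Fin N)}
    (hp : p ∉ NEset K f) (i : ℕ) : Gsel K F f i p = ∅ := by
  refine eq_empty_of_subset_empty ((Gsel_subset_zero i p).trans ?_)
  intro u hu
  exact absurd ⟨u, hu.1, hu.2.1⟩ hp

lemma qsel_of_not_mem {p : EuclideanSpace ℝ (Fin N) × EuclideanSpace ℝ (Fin N)}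
    (hp : p ∉ NEset K f) (j : Fin m) : qsel K F f j p = 0 := by
  rw [qsel, Gsel_empty hp]; simp [Real.sInf_empty]

lemma Gsel_compact_nonempty (hK : IsCompact K)
    (hFc : Continuous fun q : EuclideanSpace ℝ (Fin N) × EuclideanSpace ℝ (Fin m) => F q.1 q.2)
    (hfc : Continuous fun q : EuclideanSpace ℝ (Fin N) × EuclideanSpace ℝ (Fin m) => f q.1 q.2)
    {p : EuclideanSpace ℝ (Fin N) × EuclideanSpace ℝ (Fin N)} (hp : p ∈ NEset K f) (i : ℕ) :
    IsCompact (Gsel K F f i p) ∧ (Gsel K F f i p).Nonempty := by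
  have hfx : Continuous fun u => f p.1 u := hfc.comp (continuous_const.prodMk continuous_id)
  have hFx : Continuous fun u => F p.1 u := hFc.comp (continuous_const.prodMk continuous_id)
  induction i with
  | zero =>
    constructor
    · have : Gsel K F f 0 p = K ∩ ({u | f p.1 u = p.2} ∩
          {u | F p.1 u ≤ (phiRe K F f p.1 p.2).toReal}) := by
        ext u; rw [Gsel_zero]; simp only [mem_setOf_eq, mem_inter_iff]
      rw [this]
      exact hK.inter_right ((isClosed_eq hfx continuous_const).inter
        (isClosed_le hFx continuous_const))
    · obtain ⟨u, hu, hfu, heq⟩ := phiRe_toReal_eq hK hFc hfc hp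
      exact ⟨u, by rw [Gsel_zero]; exact ⟨hu, hfu, le_of_eq heq.symm⟩⟩
  | succ i ih =>
    by_cases h : i < m
    · obtain ⟨hcpt, hne⟩ := ih
      have hco : Continuous fun v : EuclideanSpace ℝ (Fin m) => v ⟨i, h⟩ :=
          (continuous_apply _).comp (PiLp.continuous_ofLp (p := 2) (β := fun _ : Fin m => ℝ))
      have himg : IsCompact ((fun v : EuclideanSpace ℝ (Fin m) => v ⟨i, h⟩) '' Gsel K F f i p) :=
        hcpt.image hco
      have himgne : ((fun v : EuclideanSpace ℝ (Fin m) => v ⟨i, h⟩) '' Gsel K F f i p).Nonempty :=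
        hne.image _
      obtain ⟨u, hu, huv⟩ := (himg.sInf_mem himgne)
      constructor
      · rw [Gsel_succ_pos h]
        exact hcpt.inter_right (isClosed_eq hco continuous_const)
      · exact ⟨u, by rw [Gsel_succ_pos h]; exact ⟨hu, huv⟩⟩
    · rw [Gsel_succ_neg h]; exact ih

lemma mem_Gsel_iff (i : ℕ) {p : EuclideanSpace ℝ (Fin N) × EuclideanSpace ℝ (Fin N)}
    {u : EuclideanSpace ℝ (Fin m)} :
    u ∈ Gsel K F f i p ↔ u ∈ Gsel K F f 0 p ∧
      ∀ j : Fin m, (j : ℕ) < i → u j = qsel K F f j p := by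
  induction i with
  | zero => simp
  | succ i ih =>
    by_cases h : i < m
    · rw [Gsel_succ_pos h]
      simp only [mem_sep_iff]
      constructor
      · rintro ⟨hu, hui⟩
        obtain ⟨h0, hcoord⟩ := ih.1 hu
        refine ⟨h0, fun j hj => ?_⟩
        rcases Nat.lt_succ_iff_lt_or_eq.1 hj with hj' | hj'
        · exact hcoord j hj'
        · have : j = ⟨i, h⟩ := Fin.ext hj'
          subst this
          rw [hui]; rfl
      · rintro ⟨h0, hcoord⟩
        refine ⟨ih.2 ⟨h0, fun j hj => hcoord j (Nat.lt_succ_of_lt hj)⟩, ?_⟩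
        have := hcoord ⟨i, h⟩ (Nat.lt_succ_self i)
        rw [this]; rfl
    · rw [Gsel_succ_neg h, ih]
      constructor
      · rintro ⟨h0, hcoord⟩
        exact ⟨h0, fun j hj => hcoord j (lt_of_lt_of_le j.2 (not_lt.1 h))⟩
      · rintro ⟨h0, hcoord⟩
        exact ⟨h0, fun j _ => hcoord j (Nat.lt_succ_of_lt (lt_of_lt_of_le j.2 (not_lt.1 h)))⟩

lemma selK_mem_Gsel_zero (hK : IsCompact K)
    (hFc : Continuous fun q : EuclideanSpace ℝ (Fin N) × EuclideanSpace ℝ (Fin m) => F q.1 q.2)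
    (hfc : Continuous fun q : EuclideanSpace ℝ (Fin N) × EuclideanSpace ℝ (Fin m) => f q.1 q.2)
    {p : EuclideanSpace ℝ (Fin N) × EuclideanSpace ℝ (Fin N)} (hp : p ∈ NEset K f) :
    selK K F f p ∈ Gsel K F f 0 p := by
  obtain ⟨u, hu⟩ := (Gsel_compact_nonempty hK hFc hfc hp m).2
  obtain ⟨h0, hcoord⟩ := (mem_Gsel_iff m).1 hu
  have : u = selK K F f p := by
    apply PiLp.ext
    intro j
    exact hcoord j j.2
  rwa [← this]

end Sel

section Sel2

variable {N m : ℕ} {K : Set (EuclideanSpace ℝ (Fin m))}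
  {F : EuclideanSpace ℝ (Fin N) → EuclideanSpace ℝ (Fin m) → ℝ}
  {f : EuclideanSpace ℝ (Fin N) → EuclideanSpace ℝ (Fin m) → EuclideanSpace ℝ (Fin N)}

lemma measurable_qsel (hK : IsCompact K)
    (hFc : Continuous fun q : EuclideanSpace ℝ (Fin N) × EuclideanSpace ℝ (Fin m) => F q.1 q.2)
    (hfc : Continuous fun q : EuclideanSpace ℝ (Fin N) × EuclideanSpace ℝ (Fin m) => f q.1 q.2)
    (j : Fin m) : Measurable (qsel K F f j) := by
  suffices H : ∀ n : ℕ, ∀ j : Fin m, (j : ℕ) < n → Measurable (qsel K F f j) by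
    exact H m j j.2
  intro n
  induction n with
  | zero => exact fun j hj => absurd hj (Nat.not_lt_zero _)
  | succ n ih =>
    intro j hj
    rcases Nat.lt_succ_iff_lt_or_eq.1 hj with hj' | hjn
    · exact ih j hj'
    apply measurable_of_Iic
    intro cval
    classical
    set X := ((EuclideanSpace ℝ (Fin N) × EuclideanSpace ℝ (Fin N)) × ℝ) × (Fin m → ℝ) with hX
    set P : Set (X × EuclideanSpace ℝ (Fin m)) :=
      {q : X × EuclideanSpace ℝ (Fin m) | f q.1.1.1.1 q.2 = q.1.1.1.2 ∧
        F q.1.1.1.1 q.2 ≤ q.1.1.2 ∧ (∀ j' : Fin m, j' < j → q.2 j' = q.1.2 j') ∧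
        q.2 j ≤ cval} with hP
    have hPclosed : IsClosed P := by
      have h1 : Continuous fun q : X × EuclideanSpace ℝ (Fin m) => (q.1.1.1.1, q.2) :=
        (continuous_fst.comp (continuous_fst.comp (continuous_fst.comp
          continuous_fst))).prodMk continuous_snd
      have e1 : IsClosed {q : X × EuclideanSpace ℝ (Fin m) | f q.1.1.1.1 q.2 = q.1.1.1.2} :=
        isClosed_eq (hfc.comp h1)
          (continuous_snd.comp (continuous_fst.comp (continuous_fst.comp continuous_fst)))
      have e2 : IsClosed {q : X × EuclideanSpace ℝ (Fin m) | F q.1.1.1.1 q.2 ≤ q.1.1.2} :=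
        isClosed_le (hFc.comp h1) (continuous_snd.comp (continuous_fst.comp continuous_fst))
      have e3 : IsClosed {q : X × EuclideanSpace ℝ (Fin m) |
          ∀ j' : Fin m, j' < j → q.2 j' = q.1.2 j'} := by
        have : {q : X × EuclideanSpace ℝ (Fin m) | ∀ j' : Fin m, j' < j → q.2 j' = q.1.2 j'} =
            ⋂ j' : Fin m, {q : X × EuclideanSpace ℝ (Fin m) | j' < j → q.2 j' = q.1.2 j'} := by
          ext q; simp only [mem_setOf_eq, mem_iInter]
        rw [this]
        refine isClosed_iInter fun j' => ?_
        by_cases hj'' : j' < j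
        · simp only [hj'', true_implies]
          exact isClosed_eq (((continuous_apply j').comp (PiLp.continuous_ofLp (p := 2) (β := fun _ : Fin m => ℝ))).comp continuous_snd)
            ((continuous_apply j').comp (continuous_snd.comp continuous_fst))
        · simp only [hj'', false_implies, setOf_true]
          exact isClosed_univ
      have e4 : IsClosed {q : X × EuclideanSpace ℝ (Fin m) | q.2 j ≤ cval} :=
        isClosed_le (((continuous_apply j).comp (PiLp.continuous_ofLp (p := 2) (β := fun _ : Fin m => ℝ))).comp continuous_snd) continuous_const
      exact e1.inter (e2.inter (e3.inter e4))
    have hCclosed : IsClosed {x : X | ∃ u ∈ K, (x, u) ∈ P} :=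
      isClosed_exists_of_isCompact hK hPclosed
    -- the measurable map into X
    set Ψ : (EuclideanSpace ℝ (Fin N) × EuclideanSpace ℝ (Fin N)) → X :=
      fun p => ((p, (phiRe K F f p.1 p.2).toReal),
        fun j' : Fin m => if j' < j then qsel K F f j' p else 0) with hΨ
    have hΨm : Measurable Ψ := by
      refine Measurable.prod (Measurable.prod measurable_id
        (measurable_phiRe hK hFc hfc).ereal_toReal) ?_
      refine measurable_pi_lambda _ fun j' => ?_
      by_cases hj'' : j' < j
      · simp only [hΨ, hj'', if_true]
        exact ih j' (by rw [← hjn]; exact Fin.lt_def.mp hj'')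
      · simp only [hΨ, hj'', if_false]
        exact measurable_const
    have key : qsel K F f j ⁻¹' Iic cval =
        (NEset K f ∩ Ψ ⁻¹' {x : X | ∃ u ∈ K, (x, u) ∈ P}) ∪
        ((NEset K f)ᶜ ∩ {p | (0 : ℝ) ≤ cval}) := by
      ext p
      by_cases hp : p ∈ NEset K f
      · simp only [mem_preimage, mem_Iic, mem_union, mem_inter_iff, hp, true_and,
          mem_compl_iff, not_true_eq_false, false_and, or_false, mem_setOf_eq, hΨ, hP]
        constructor
        · intro hle
          obtain ⟨hcpt, hne⟩ := Gsel_compact_nonempty hK hFc hfc hp (j : ℕ)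
          have himg := hcpt.image ((continuous_apply j).comp (PiLp.continuous_ofLp (p := 2) (β := fun _ : Fin m => ℝ)))
          obtain ⟨u, hu, huj⟩ := himg.sInf_mem (hne.image _)
          obtain ⟨h0, hcoord⟩ := (mem_Gsel_iff _).1 hu
          rw [Gsel_zero] at h0
          refine ⟨u, h0.1, h0.2.1, h0.2.2, fun j' hj'' => ?_, ?_⟩
          · simp only [if_pos hj'']
            exact hcoord j' (Fin.lt_def.mp hj'')
          · have : u j = qsel K F f j p := huj
            rw [this]; exact hle
        · rintro ⟨u, huK, hfu, hFu, hcoord, hujc⟩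
          have humem : u ∈ Gsel K F f (j : ℕ) p := by
            rw [mem_Gsel_iff]
            refine ⟨by rw [Gsel_zero]; exact ⟨huK, hfu, hFu⟩, fun j' hj'' => ?_⟩
            have h' := hcoord j' (Fin.lt_def.mpr hj'')
            rwa [if_pos (Fin.lt_def.mpr hj'')] at h'
          have hbdd : BddBelow ((fun v : EuclideanSpace ℝ (Fin m) => v j) ''
              Gsel K F f (j : ℕ) p) :=
            ((Gsel_compact_nonempty hK hFc hfc hp (j : ℕ)).1.image
              ((continuous_apply j).comp (PiLp.continuous_ofLp (p := 2) (β := fun _ : Fin m => ℝ)))).bddBelow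
          exact le_trans (csInf_le hbdd ⟨u, humem, rfl⟩) hujc
      · simp only [mem_preimage, mem_Iic, mem_union, mem_inter_iff, hp, false_and,
          mem_compl_iff, not_false_eq_true, true_and, false_or, mem_setOf_eq]
        rw [qsel_of_not_mem hp]
    rw [key]
    have hNE := (isClosed_NEset hK hfc).measurableSet
    refine MeasurableSet.union (hNE.inter (hΨm hCclosed.measurableSet))
      (hNE.compl.inter ?_)
    by_cases h0c : (0 : ℝ) ≤ cval
    · have : {p : EuclideanSpace ℝ (Fin N) × EuclideanSpace ℝ (Fin N) | (0 : ℝ) ≤ cval} =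
        univ := by ext p; simp [h0c]
      rw [this]; exact MeasurableSet.univ
    · have : {p : EuclideanSpace ℝ (Fin N) × EuclideanSpace ℝ (Fin N) | (0 : ℝ) ≤ cval} =
        ∅ := by ext p; simp [h0c]
      rw [this]; exact MeasurableSet.empty

lemma measurable_selK (hK : IsCompact K)
    (hFc : Continuous fun q : EuclideanSpace ℝ (Fin N) × EuclideanSpace ℝ (Fin m) => F q.1 q.2)
    (hfc : Continuous fun q : EuclideanSpace ℝ (Fin N) × EuclideanSpace ℝ (Fin m) => f q.1 q.2) :
    Measurable (selK K F f) := by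
  refine ((EuclideanSpace.equiv (Fin m) ℝ).symm.continuous.measurable).comp ?_
  exact measurable_pi_lambda _ fun j => measurable_qsel hK hFc hfc j

lemma selK_spec (hK : IsCompact K)
    (hFc : Continuous fun q : EuclideanSpace ℝ (Fin N) × EuclideanSpace ℝ (Fin m) => F q.1 q.2)
    (hfc : Continuous fun q : EuclideanSpace ℝ (Fin N) × EuclideanSpace ℝ (Fin m) => f q.1 q.2)
    {p : EuclideanSpace ℝ (Fin N) × EuclideanSpace ℝ (Fin N)} (hp : p ∈ NEset K f) :
    selK K F f p ∈ K ∧ f p.1 (selK K F f p) = p.2 ∧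
      F p.1 (selK K F f p) ≤ (phiRe K F f p.1 p.2).toReal := by
  have := selK_mem_Gsel_zero hK hFc hfc hp
  rw [Gsel_zero] at this
  exact this

end Sel2

theorem stmt_3 {N m : ℕ} (T : ℝ) (hT : 0 < T)
    (K : Set (EuclideanSpace ℝ (Fin m))) (hK : IsCompact K)
    (F : EuclideanSpace ℝ (Fin N) → EuclideanSpace ℝ (Fin m) → ℝ)
    (hFc : Continuous fun q : EuclideanSpace ℝ (Fin N) × EuclideanSpace ℝ (Fin m) => F q.1 q.2)
    (hFb : ∃ c : ℝ, ∀ x u, c ≤ F x u)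
    (f : EuclideanSpace ℝ (Fin N) → EuclideanSpace ℝ (Fin m) → EuclideanSpace ℝ (Fin N))
    (hfc : Continuous fun q : EuclideanSpace ℝ (Fin N) × EuclideanSpace ℝ (Fin m) => f q.1 q.2)
    (t : ℝ) (ht0 : 0 ≤ t) (htT : t < T) (y : EuclideanSpace ℝ (Fin N))
    (x : ℝ → EuclideanSpace ℝ (Fin N)) (u : ℝ → EuclideanSpace ℝ (Fin m))
    (hfeas : FeasiblePair T K f t y x u)
    (hmin : ∀ x' u', FeasiblePair T K f t y x' u' →
      (∫ s in t..T, F (x s) (u s)) ≤ ∫ s in t..T, F (x' s) (u' s)) :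
    Admissible t T y x (fun s => f (x s) (u s)) ∧
    ∀ z w, Admissible t T y z w →
      Jphi K F f t T x (fun s => f (x s) (u s)) ≤ Jphi K F f t T z w := by
  classical
  obtain ⟨c, hc⟩ := hFb
  obtain ⟨humeas, huK, hxint, hxeq⟩ := hfeas
  have htT' : t ≤ T := htT.le
  refine ⟨⟨hxint, hxeq⟩, ?_⟩
  intro z w hzw
  -- continuous clamping
  have hσcont : Continuous fun s : ℝ => max t (min s T) :=
    continuous_const.max (continuous_id.min continuous_const)
  have hσmem : ∀ s : ℝ, max t (min s T) ∈ uIcc t T := by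
    intro s
    rw [uIcc_of_le htT']
    exact ⟨le_max_left _ _, max_le htT' (min_le_right s T)⟩
  have hclamp : ∀ s ∈ Icc t T, max t (min s T) = s := fun s hs => by
    rw [min_eq_left hs.2, max_eq_right hs.1]
  -- continuous version of x
  set xc : ℝ → EuclideanSpace ℝ (Fin N) :=
    fun s => y + ∫ r in t..(max t (min s T)), f (x r) (u r) with hxcdef
  have hxc_cont : Continuous xc := by
    have h1 := intervalIntegral.continuousOn_primitive_interval' hxint left_mem_uIcc
    exact continuous_const.add (h1.comp_continuous hσcont hσmem)
  have hxc_eq : ∀ s ∈ Icc t T, x s = xc s := fun s hs => by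
    rw [hxcdef]; simp only; rw [hclamp s hs]; exact hxeq s hs
  -- bound on F over a compact set
  have hQ : IsCompact ((xc '' Icc t T) ×ˢ K) := ((isCompact_Icc).image hxc_cont).prod hK
  obtain ⟨B, hB⟩ := hQ.exists_bound_of_continuousOn hFc.continuousOn
  set M := max |c| B with hM
  have hbound : ∀ (a : EuclideanSpace ℝ (Fin N)) (v : EuclideanSpace ℝ (Fin m)),
      a ∈ xc '' Icc t T → v ∈ K → |(phiRe K F f a (f a v)).toReal| ≤ M ∧ |F a v| ≤ M := by
    intro a v ha hv
    have hne : ∃ u₀ ∈ K, f a u₀ = f a v := ⟨v, hv, rfl⟩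
    have h1 : (phiRe K F f a (f a v)).toReal ≤ F a v := phiRe_toReal_le hc hv rfl
    have h2 : c ≤ (phiRe K F f a (f a v)).toReal := by
      have := EReal.toReal_le_toReal (phiRe_lb hc a (f a v)) (EReal.coe_ne_bot c)
        (phiRe_ne_top hne)
      simpa using this
    have h3 : |F a v| ≤ B := by
      have := hB (a, v) ⟨ha, hv⟩
      simpa [Real.norm_eq_abs] using this
    have h4 : |F a v| ≤ M := h3.trans (le_max_right _ _)
    refine ⟨abs_le.2 ⟨?_, ?_⟩, h4⟩
    · exact le_trans (neg_le_neg (le_max_left |c| B)) ((neg_abs_le c).trans h2)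
    · exact h1.trans ((le_abs_self _).trans h4)
  -- LHS if-condition
  have hLae : ∀ᵐ s ∂(volume.restrict (Ioo t T)), ∃ u₀ ∈ K, f (x s) u₀ = f (x s) (u s) := by
    filter_upwards [ae_restrict_mem measurableSet_Ioo] with s hs
    exact ⟨u s, huK s (Ioo_subset_Icc_self hs), rfl⟩
  have hgm : Measurable fun s => (phiRe K F f (xc s) (f (xc s) (u s))).toReal := by
    have hpair : Measurable fun s => ((xc s, f (xc s) (u s)) :
        EuclideanSpace ℝ (Fin N) × EuclideanSpace ℝ (Fin N)) :=
      (hxc_cont.measurable).prodMk (hfc.measurable.comp ((hxc_cont.measurable).prodMk humeas))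
    exact ((measurable_phiRe hK hFc hfc).comp hpair).ereal_toReal
  have hIocfin : volume (Ioc t T) < ⊤ := measure_Ioc_lt_top
  have hgint : IntegrableOn (fun s => (phiRe K F f (xc s) (f (xc s) (u s))).toReal)
      (Ioc t T) volume := by
    refine Integrable.mono' (g := fun _ => M) ((integrableOn_const_iff).2 (Or.inr hIocfin))
      hgm.aestronglyMeasurable ?_
    filter_upwards [ae_restrict_mem measurableSet_Ioc] with s hs
    have hsI : s ∈ Icc t T := Ioc_subset_Icc_self hs
    have := (hbound (xc s) (u s) ⟨s, hsI, rfl⟩ (huK s hsI)).1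
    simpa [Real.norm_eq_abs] using this
  have hLint : IntervalIntegrable (fun s => (phiRe K F f (x s) (f (x s) (u s))).toReal)
      volume t T := by
    rw [intervalIntegrable_iff_integrableOn_Ioc_of_le htT']
    refine hgint.congr_fun ?_ measurableSet_Ioc
    intro s hs
    dsimp only
    rw [hxc_eq s (Ioc_subset_Icc_self hs)]
  have hFm : Measurable fun s => F (xc s) (u s) :=
    hFc.measurable.comp ((hxc_cont.measurable).prodMk humeas)
  have hFint' : IntegrableOn (fun s => F (xc s) (u s)) (Ioc t T) volume := by
    refine Integrable.mono' (g := fun _ => M) ((integrableOn_const_iff).2 (Or.inr hIocfin))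
      hFm.aestronglyMeasurable ?_
    filter_upwards [ae_restrict_mem measurableSet_Ioc] with s hs
    have hsI : s ∈ Icc t T := Ioc_subset_Icc_self hs
    have := (hbound (xc s) (u s) ⟨s, hsI, rfl⟩ (huK s hsI)).2
    simpa [Real.norm_eq_abs] using this
  have hFint : IntervalIntegrable (fun s => F (x s) (u s)) volume t T := by
    rw [intervalIntegrable_iff_integrableOn_Ioc_of_le htT']
    refine hFint'.congr_fun ?_ measurableSet_Ioc
    intro s hs
    dsimp only
    rw [hxc_eq s (Ioc_subset_Icc_self hs)]
  -- case split on the RHS condition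
  by_cases hcond : (∀ᵐ s ∂(volume.restrict (Ioo t T)), ∃ u₀ ∈ K, f (z s) u₀ = w s) ∧
      IntervalIntegrable (fun s => (phiRe K F f (z s) (w s)).toReal) volume t T
  swap
  · simp only [Jphi]
    rw [if_neg hcond]
    exact le_top
  obtain ⟨hae, hwphiint⟩ := hcond
  -- K is nonempty
  have hne_meas : volume.restrict (Ioo t T) ≠ 0 := by
    intro h
    rw [Measure.restrict_eq_zero, Real.volume_Ioo, ENNReal.ofReal_eq_zero] at h
    linarith
  haveI : (ae (volume.restrict (Ioo t T))).NeBot := ae_neBot.2 hne_meas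
  obtain ⟨s₀, u₀, hu₀K, -⟩ := hae.exists
  -- continuous version of z
  have hwint : IntervalIntegrable w volume t T := hzw.1
  set zc : ℝ → EuclideanSpace ℝ (Fin N) :=
    fun s => y + ∫ r in t..(max t (min s T)), w r with hzcdef
  have hzc_cont : Continuous zc := by
    have h1 := intervalIntegral.continuousOn_primitive_interval' hwint left_mem_uIcc
    exact continuous_const.add (h1.comp_continuous hσcont hσmem)
  have hzc_eq : ∀ s ∈ Icc t T, z s = zc s := fun s hs => by
    rw [hzcdef]; simp only; rw [hclamp s hs]; exact hzw.2 s hs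
  -- measurable version of w
  have hwIoc : IntegrableOn w (Ioc t T) volume :=
    (intervalIntegrable_iff_integrableOn_Ioc_of_le htT').1 hwint
  set wm := hwIoc.aestronglyMeasurable.mk w with hwmdef
  have hwm_meas : StronglyMeasurable wm := hwIoc.aestronglyMeasurable.stronglyMeasurable_mk
  have hres : volume.restrict (Ioo t T) = volume.restrict (Ioc t T) :=
    Measure.restrict_congr_set Ioo_ae_eq_Ioc
  have hwm_ae : ∀ᵐ s ∂(volume.restrict (Ioo t T)), w s = wm s := by
    rw [hres]; exact hwIoc.aestronglyMeasurable.ae_eq_mk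
  -- the selected control
  set v : ℝ → EuclideanSpace ℝ (Fin m) := fun s =>
    if (zc s, wm s) ∈ NEset K f then selK K F f (zc s, wm s) else u₀ with hvdef
  set u' : ℝ → EuclideanSpace ℝ (Fin m) := (Ioo t T).piecewise v (fun _ => u₀) with hu'def
  have hvmeas : Measurable v := by
    have houter : Measurable fun q => if q ∈ NEset K f then selK K F f q else u₀ :=
      Measurable.ite (isClosed_NEset hK hfc).measurableSet (measurable_selK hK hFc hfc)
        measurable_const
    exact houter.comp ((hzc_cont.measurable).prodMk hwm_meas.measurable)
  have hu'meas : Measurable u' := Measurable.piecewise measurableSet_Ioo hvmeas measurable_const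
  have hu'K : ∀ s, u' s ∈ K := by
    intro s
    by_cases hs : s ∈ Ioo t T
    · rw [hu'def, Set.piecewise_eq_of_mem _ _ _ hs, hvdef]
      dsimp only
      split_ifs with h
      · exact (selK_spec hK hFc hfc h).1
      · exact hu₀K
    · rw [hu'def, Set.piecewise_eq_of_notMem _ _ _ hs]; exact hu₀K
  have hkey : ∀ᵐ s ∂(volume.restrict (Ioo t T)),
      f (z s) (u' s) = w s ∧ F (z s) (u' s) = (phiRe K F f (z s) (w s)).toReal := by
    filter_upwards [hae, hwm_ae, ae_restrict_mem measurableSet_Ioo] with s hsne hws hsIoo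
    have hzcs : zc s = z s := (hzc_eq s (Ioo_subset_Icc_self hsIoo)).symm
    have hmem : (zc s, wm s) ∈ NEset K f := by
      obtain ⟨u₁, hu₁, hfu₁⟩ := hsne
      exact ⟨u₁, hu₁, by rw [hzcs, ← hws]; exact hfu₁⟩
    have hu's : u' s = selK K F f (zc s, wm s) := by
      rw [hu'def, Set.piecewise_eq_of_mem _ _ _ hsIoo, hvdef]
      simp only [if_pos hmem]
    obtain ⟨hKsel, hfsel, hFsel⟩ := selK_spec hK hFc hfc hmem
    simp only at hfsel hFsel
    rw [hzcs, ← hws] at hu's hfsel hFsel hKsel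
    constructor
    · rw [hu's]; exact hfsel
    · rw [hu's]
      exact le_antisymm hFsel (phiRe_toReal_le hc hKsel hfsel)
  have hkey' : ∀ᵐ s ∂(volume : Measure ℝ), s ∈ Ioo t T →
      (f (z s) (u' s) = w s ∧ F (z s) (u' s) = (phiRe K F f (z s) (w s)).toReal) :=
    (ae_restrict_iff' measurableSet_Ioo).1 hkey
  have hfu'int : IntervalIntegrable (fun r => f (z r) (u' r)) volume t T := by
    rw [intervalIntegrable_iff_integrableOn_Ioc_of_le htT']
    refine hwIoc.congr ?_
    rw [← hres]
    filter_upwards [hkey] with s hs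
    exact hs.1.symm
  have hzint : ∀ s ∈ Icc t T, z s = y + ∫ r in t..s, f (z r) (u' r) := by
    intro s hs
    rw [hzw.2 s hs]
    congr 1
    refine (intervalIntegral.integral_congr_ae ?_).symm
    have hne_s : ∀ᵐ r ∂(volume : Measure ℝ), r ≠ s := by
      rw [Filter.eventually_iff, mem_ae_iff]
      have : {r : ℝ | r ≠ s}ᶜ = {s} := by ext r; simp
      rw [this]
      exact measure_singleton s
    filter_upwards [hkey', hne_s] with r hr hrs hrI
    rw [uIoc_of_le hs.1] at hrI
    have hrmem : r ∈ Ioo t T := ⟨hrI.1, (lt_of_le_of_ne hrI.2 hrs).trans_le hs.2⟩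
    exact (hr hrmem).1
  have hfeas' : FeasiblePair T K f t y z u' :=
    ⟨hu'meas, fun s _ => hu'K s, hfu'int, hzint⟩
  have hmin' := hmin z u' hfeas'
  have heqF : ∫ s in t..T, F (z s) (u' s) = ∫ s in t..T, (phiRe K F f (z s) (w s)).toReal := by
    refine intervalIntegral.integral_congr_ae ?_
    have hne_T : ∀ᵐ r ∂(volume : Measure ℝ), r ≠ T := by
      rw [Filter.eventually_iff, mem_ae_iff]
      have : {r : ℝ | r ≠ T}ᶜ = {T} := by ext r; simp
      rw [this]
      exact measure_singleton T
    filter_upwards [hkey', hne_T] with r hr hrT hrI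
    rw [uIoc_of_le htT'] at hrI
    exact (hr ⟨hrI.1, lt_of_le_of_ne hrI.2 hrT⟩).2
  have hphi_le_F : ∫ s in t..T, (phiRe K F f (x s) (f (x s) (u s))).toReal ≤
      ∫ s in t..T, F (x s) (u s) := by
    refine intervalIntegral.integral_mono_on htT' hLint hFint ?_
    intro s hs
    exact phiRe_toReal_le hc (huK s hs) rfl
  simp only [Jphi]
  rw [if_pos ⟨hLae, hLint⟩, if_pos ⟨hae, hwphiint⟩]
  rw [EReal.coe_le_coe_iff]
  calc ∫ s in t..T, (phiRe K F f (x s) (f (x s) (u s))).toReal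
      ≤ ∫ s in t..T, F (x s) (u s) := hphi_le_F
    _ ≤ ∫ s in t..T, F (z s) (u' s) := hmin'
    _ = ∫ s in t..T, (phiRe K F f (z s) (w s)).toReal := heqF
end
end

section
/- Suppose v : [0,T]×ℝ^N → ℝ^N is C¹ and Lipschitz in the spatial variable uniformly in t, and satisfies the first-order system v_t(t,x) + ∇v(t,x) v(t,x) + φ_{ξξ}(x, v(t,x))^{-1} ( φ_{ξx}(x, v(t,x)) v(t,x) − φ_x(x, v(t,x)) ) = 0 for all (t,x) ∈ (0,T)×ℝ^N, together with the terminal condition φ_ξ(x, v(T,x)) = 0 for all x ∈ ℝ^N. Then for every (t,y) ∈ [0,T)×ℝ^N, the solution x of x'(s) = v(s, x(s)) on (t,T), x(t) = y, satisfies ∫_t^T φ(x(s), x'(s)) ds ≤ ∫_t^T φ(z(s), z'(s)) ds for every admissible path z on [t,T] starting at y for which s ↦ φ(z(s), z'(s)) is integrable. -/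
open MeasureTheory Set
open scoped RealInnerProductSpace

noncomputable section

/-- `φ_ξ(x,ξ)`: the gradient of `φ(x,·)`. -/
def gradXi {N : ℕ} (φ : EuclideanSpace ℝ (Fin N) → EuclideanSpace ℝ (Fin N) → ℝ)
    (x ξ : EuclideanSpace ℝ (Fin N)) : EuclideanSpace ℝ (Fin N) :=
  gradient (φ x) ξ

/-- `φ_x(x,ξ)`: the gradient of `φ(·,ξ)`. -/
def gradX {N : ℕ} (φ : EuclideanSpace ℝ (Fin N) → EuclideanSpace ℝ (Fin N) → ℝ)
    (x ξ : EuclideanSpace ℝ (Fin N)) : EuclideanSpace ℝ (Fin N) :=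
  gradient (fun x' => φ x' ξ) x

/-- `φ_{ξξ}(x,ξ)`: the Hessian block in `ξ`, as a continuous linear map. -/
def hessXiXi {N : ℕ} (φ : EuclideanSpace ℝ (Fin N) → EuclideanSpace ℝ (Fin N) → ℝ)
    (x ξ : EuclideanSpace ℝ (Fin N)) :
    EuclideanSpace ℝ (Fin N) →L[ℝ] EuclideanSpace ℝ (Fin N) :=
  fderiv ℝ (fun ξ' => gradient (φ x) ξ') ξ

/-- `φ_{ξx}(x,ξ)`: the mixed Hessian block (derivative in `x` of `φ_ξ`). -/
def hessXiX {N : ℕ} (φ : EuclideanSpace ℝ (Fin N) → EuclideanSpace ℝ (Fin N) → ℝ)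
    (x ξ : EuclideanSpace ℝ (Fin N)) :
    EuclideanSpace ℝ (Fin N) →L[ℝ] EuclideanSpace ℝ (Fin N) :=
  fderiv ℝ (fun x' => gradient (φ x') ξ) x


/-- Auxiliary: gradient inequality for a convex differentiable function. -/
lemma aux_convexOn_fderiv_le {F : Type*} [NormedAddCommGroup F] [NormedSpace ℝ F]
    {Φ : F → ℝ} (hconv : ConvexOn ℝ Set.univ Φ) {a b : F} {L : F →L[ℝ] ℝ}
    (hL : HasFDerivAt Φ L a) : Φ a + L (b - a) ≤ Φ b := by
  set g : ℝ → ℝ := fun τ : ℝ => Φ (a + τ • (b - a)) with hgdef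
  have hg : ConvexOn ℝ univ g := by
    have h2 := hconv.comp_affineMap (AffineMap.lineMap a b)
    have he : (⇑(AffineMap.lineMap a b) ⁻¹' univ : Set ℝ) = univ := preimage_univ
    rw [he] at h2
    suffices hgeq : g = Φ ∘ ⇑(AffineMap.lineMap a b) by rw [hgeq]; exact h2
    funext τ
    have hv : a + τ • (b - a) = AffineMap.lineMap a b τ := by
      simp [AffineMap.lineMap_apply]; module
    simp only [hgdef, Function.comp_apply, hv]
  have hderiv : HasDerivAt g (L (b - a)) 0 := by
    have hl : HasDerivAt (fun τ : ℝ => a + τ • (b - a)) (b - a) 0 := by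
      simpa using ((hasDerivAt_id (0:ℝ)).smul_const (b - a)).const_add a
    have hL' : HasFDerivAt Φ L (a + (0:ℝ) • (b - a)) := by simpa using hL
    simpa [hgdef, Function.comp_def] using hL'.comp_hasDerivAt (0:ℝ) hl
  have hs : L (b-a) ≤ (g 1 - g 0) / (1 - 0) := by
    simpa [slope_def_field] using
      hg.le_slope_of_hasDerivAt (mem_univ 0) (mem_univ 1) one_pos hderiv
  have h0 : g 0 = Φ a := by simp [hgdef]
  have h1 : g 1 = Φ b := by simp [hgdef]
  have hms : L (b - a) = L b - L a := L.map_sub b a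
  rw [h0, h1] at hs; simp at hs; linarith

/-- Auxiliary: Fubini-type swap over a triangle. -/
lemma aux_triangle_swap {E : Type*} [NormedAddCommGroup E] [InnerProductSpace ℝ E]
    [CompleteSpace E] {a b : ℝ} {f g : ℝ → E} (hf : Continuous f)
    (hg : IntegrableOn g (Ioc a b)) :
    ∫ s in Ioc a b, ⟪(∫ r in Ioc s b, f r), g s⟫ =
      ∫ r in Ioc a b, ⟪f r, ∫ s in Ioc a r, g s⟫ := by
  set μ := volume.restrict (Ioc a b) with hμ
  haveI : IsFiniteMeasure μ := by
    constructor
    rw [hμ, Measure.restrict_apply_univ]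
    exact measure_Ioc_lt_top
  obtain ⟨C, hC⟩ := (isCompact_Icc (a := a) (b := b)).exists_bound_of_continuousOn
    hf.continuousOn
  set F : ℝ → ℝ → ℝ := fun s r => if s < r then ⟪f r, g s⟫ else 0 with hF
  have hfint : ∀ c d, IntegrableOn f (Ioc c d) := fun c d => hf.integrableOn_Ioc
  have step1 : ∀ s ∈ Ioc a b, ⟪(∫ r in Ioc s b, f r), g s⟫ = ∫ r, F s r ∂μ := by
    intro s hs
    have h1 : ⟪(∫ r in Ioc s b, f r), g s⟫ = ∫ r in Ioc s b, ⟪f r, g s⟫ := by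
      rw [real_inner_comm, ← integral_inner (hfint s b)]
      simp_rw [real_inner_comm]
    rw [h1]
    have h2 : ∫ r in Ioc s b, ⟪f r, g s⟫
        = ∫ r, (Ioc s b).indicator (fun r => ⟪f r, g s⟫) r ∂μ := by
      rw [integral_indicator measurableSet_Ioc, hμ, Measure.restrict_restrict measurableSet_Ioc,
        inter_eq_left.mpr (Ioc_subset_Ioc_left hs.1.le)]
    rw [h2]
    refine integral_congr_ae ?_
    filter_upwards [ae_restrict_mem measurableSet_Ioc] with r hr
    simp only [indicator_apply, mem_Ioc, hF]
    by_cases h : s < r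
    · simp [h, hr.2]
    · simp [h]
  have step3 : ∀ r ∈ Ioc a b, (∫ s, F s r ∂μ) = ⟪f r, ∫ s in Ioc a r, g s⟫ := by
    intro r hr
    have h1 : (fun s => F s r) = (Iio r).indicator (fun s => ⟪f r, g s⟫) := by
      funext s
      simp only [hF, indicator_apply, mem_Iio]
    rw [h1, integral_indicator measurableSet_Iio, hμ,
      Measure.restrict_restrict measurableSet_Iio]
    have h2 : Iio r ∩ Ioc a b = Ioo a r := by
      ext u; simp only [mem_inter_iff, mem_Iio, mem_Ioc, mem_Ioo]
      constructor
      · rintro ⟨h3, h4, h5⟩; exact ⟨h4, h3⟩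
      · rintro ⟨h4, h3⟩; exact ⟨h3, h4, (h3.le.trans hr.2)⟩
    rw [h2, ← integral_Ioc_eq_integral_Ioo,
      ← integral_inner (hg.mono_set (Ioc_subset_Ioc_right hr.2))]
  have hgm : AEStronglyMeasurable g μ := hg.aestronglyMeasurable
  have hmeas : AEStronglyMeasurable (Function.uncurry F) (μ.prod μ) := by
    have : Function.uncurry F = ({p : ℝ × ℝ | p.1 < p.2}).indicator
        (fun p : ℝ × ℝ => ⟪f p.2, g p.1⟫) := by
      funext p
      simp only [Function.uncurry, hF, indicator_apply, mem_setOf_eq]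
    rw [this]
    exact (AEStronglyMeasurable.inner (hf.aestronglyMeasurable.comp_snd) hgm.comp_fst).indicator
      (measurableSet_lt measurable_fst measurable_snd)
  have hint : Integrable (Function.uncurry F) (μ.prod μ) := by
    refine Integrable.mono' (g := fun p : ℝ × ℝ => |C| * ‖g p.1‖) ?_ hmeas ?_
    · have h1 : Integrable (fun s => |C| * ‖g s‖) μ := (hg.norm.const_mul _)
      have h2 : Integrable (fun _ : ℝ => (1:ℝ)) μ := integrable_const 1
      have := h1.mul_prod h2
      simpa using this
    · have hprod : μ.prod μ = (volume.prod volume).restrict ((Ioc a b) ×ˢ (Ioc a b)) := by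
        rw [hμ, Measure.prod_restrict]
      rw [hprod]
      filter_upwards [ae_restrict_mem (measurableSet_Ioc.prod measurableSet_Ioc)] with p hp
      have hp2 : p.2 ∈ Icc a b := Ioc_subset_Icc_self hp.2
      have hb1 : ‖Function.uncurry F p‖ ≤ ‖f p.2‖ * ‖g p.1‖ := by
        simp only [Function.uncurry, hF]
        by_cases h : p.1 < p.2
        · simp only [if_pos h]
          exact (norm_inner_le_norm _ _)
        · simp only [if_neg h, norm_zero]
          positivity
      refine hb1.trans ?_
      have := hC p.2 hp2
      have hCle : ‖f p.2‖ ≤ |C| := this.trans (le_abs_self C)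
      exact mul_le_mul_of_nonneg_right hCle (norm_nonneg _)
  calc ∫ s in Ioc a b, ⟪(∫ r in Ioc s b, f r), g s⟫
      = ∫ s, (∫ r, F s r ∂μ) ∂μ := by
        refine integral_congr_ae ?_
        filter_upwards [ae_restrict_mem measurableSet_Ioc] with s hs
        exact step1 s hs
    _ = ∫ r, (∫ s, F s r ∂μ) ∂μ := integral_integral_swap hint
    _ = ∫ r in Ioc a b, ⟪f r, ∫ s in Ioc a r, g s⟫ := by
        refine integral_congr_ae ?_
        filter_upwards [ae_restrict_mem measurableSet_Ioc] with r hr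
        exact step3 r hr

theorem stmt_5 {N : ℕ} (T : ℝ) (hT : 0 < T)
    (φ : EuclideanSpace ℝ (Fin N) → EuclideanSpace ℝ (Fin N) → ℝ)
    (hφ : ContDiff ℝ 2 fun q : EuclideanSpace ℝ (Fin N) × EuclideanSpace ℝ (Fin N) => φ q.1 q.2)
    (hconv : ConvexOn ℝ Set.univ
      fun q : EuclideanSpace ℝ (Fin N) × EuclideanSpace ℝ (Fin N) => φ q.1 q.2)
    -- positive definiteness (hence invertibility) of the Hessian block φ_{ξξ}
    (hpos : ∀ x ξ v : EuclideanSpace ℝ (Fin N), v ≠ 0 → 0 < ⟪v, hessXiXi φ x ξ v⟫)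
    -- the field v : [0,T] × ℝ^N → ℝ^N, C¹ and spatially Lipschitz uniformly in t
    (v : ℝ → EuclideanSpace ℝ (Fin N) → EuclideanSpace ℝ (Fin N))
    (hv : ContDiffOn ℝ 1 (fun q : ℝ × EuclideanSpace ℝ (Fin N) => v q.1 q.2)
      (Icc 0 T ×ˢ Set.univ))
    (Lv : NNReal) (hLip : ∀ t ∈ Icc (0:ℝ) T, LipschitzWith Lv (v t))
    -- the first-order PDE system v_t + (∇v) v + φ_{ξξ}⁻¹ (φ_{ξx} v − φ_x) = 0 on (0,T) × ℝ^N
    (hPDE : ∀ t ∈ Ioo (0:ℝ) T, ∀ x : EuclideanSpace ℝ (Fin N),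
      HasDerivAt (fun τ => v τ x)
        (-(fderiv ℝ (v t) x (v t x)
            + Ring.inverse (hessXiXi φ x (v t x))
              (hessXiX φ x (v t x) (v t x) - gradX φ x (v t x)))) t)
    -- the terminal condition φ_ξ(x, v(T,x)) = 0
    (hterm : ∀ x : EuclideanSpace ℝ (Fin N), gradXi φ x (v T x) = 0)
    -- an integral curve of v starting from (t,y)
    (t : ℝ) (ht : t ∈ Ico 0 T) (y : EuclideanSpace ℝ (Fin N))
    (x : ℝ → EuclideanSpace ℝ (Fin N)) (hxt : x t = y)
    (hxode : ∀ s ∈ Icc t T, HasDerivWithinAt x (v s (x s)) (Icc t T) s) :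
    -- it minimizes the variational problem among admissible competitors with
    -- integrable running cost
    ∀ z w, Admissible t T y z w →
      IntervalIntegrable (fun s => φ (z s) (w s)) volume t T →
      (∫ s in t..T, φ (x s) (v s (x s))) ≤ ∫ s in t..T, φ (z s) (w s) := by
  intro z w hzw hzwint
  obtain ⟨hw, hz⟩ := hzw
  have htT : t < T := ht.2
  have htT' : t ≤ T := htT.le
  have h0t : 0 ≤ t := ht.1
  -- notation
  set Φ : (EuclideanSpace ℝ (Fin N)) × (EuclideanSpace ℝ (Fin N)) → ℝ :=
    fun q => φ q.1 q.2 with hΦdef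
  have hΦd : Differentiable ℝ Φ := hφ.differentiable (by norm_num)
  set D : (EuclideanSpace ℝ (Fin N)) × (EuclideanSpace ℝ (Fin N)) →
      ((EuclideanSpace ℝ (Fin N)) × (EuclideanSpace ℝ (Fin N)) →L[ℝ] ℝ) :=
    fderiv ℝ Φ with hD
  have hD1 : ContDiff ℝ 1 D := hφ.fderiv_right (m := 1) (by norm_num)
  set c0 : EuclideanSpace ℝ (Fin N) →L[ℝ]
      (EuclideanSpace ℝ (Fin N)) × (EuclideanSpace ℝ (Fin N)) :=
    (0 : EuclideanSpace ℝ (Fin N) →L[ℝ] EuclideanSpace ℝ (Fin N)).prod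
      (ContinuousLinearMap.id ℝ _) with hc0
  set c1 : EuclideanSpace ℝ (Fin N) →L[ℝ]
      (EuclideanSpace ℝ (Fin N)) × (EuclideanSpace ℝ (Fin N)) :=
    (ContinuousLinearMap.id ℝ _).prod
      (0 : EuclideanSpace ℝ (Fin N) →L[ℝ] EuclideanSpace ℝ (Fin N)) with hc1
  -- partial derivatives of Φ
  have hpart2 : ∀ a b : EuclideanSpace ℝ (Fin N),
      HasFDerivAt (φ a) ((D (a,b)).comp c0) b := by
    intro a b
    have h2 : HasFDerivAt (fun ξ => ((a, ξ) :
        (EuclideanSpace ℝ (Fin N)) × (EuclideanSpace ℝ (Fin N)))) c0 b :=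
      (hasFDerivAt_const a b).prodMk (hasFDerivAt_id b)
    exact ((hΦd (a, b)).hasFDerivAt).comp b h2
  have hpart1 : ∀ a b : EuclideanSpace ℝ (Fin N),
      HasFDerivAt (fun a' => φ a' b) ((D (a,b)).comp c1) a := by
    intro a b
    have h2 : HasFDerivAt (fun a' => ((a', b) :
        (EuclideanSpace ℝ (Fin N)) × (EuclideanSpace ℝ (Fin N)))) c1 a :=
      (hasFDerivAt_id a).prodMk (hasFDerivAt_const b a)
    exact ((hΦd (a, b)).hasFDerivAt).comp a h2
  have hgradXi_eq : ∀ a b : EuclideanSpace ℝ (Fin N),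
      gradXi φ a b = (InnerProductSpace.toDual ℝ _).symm ((D (a,b)).comp c0) := by
    intro a b
    rw [gradXi, gradient, (hpart2 a b).fderiv]
  have hgradX_eq : ∀ a b : EuclideanSpace ℝ (Fin N),
      gradX φ a b = (InnerProductSpace.toDual ℝ _).symm ((D (a,b)).comp c1) := by
    intro a b
    rw [gradX, gradient, (hpart1 a b).fderiv]
  have hinnerXi : ∀ a b k : EuclideanSpace ℝ (Fin N), ⟪gradXi φ a b, k⟫ = D (a,b) (0, k) := by
    intro a b k
    rw [hgradXi_eq, InnerProductSpace.toDual_symm_apply]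
    simp [hc0]
  have hinnerX : ∀ a b h : EuclideanSpace ℝ (Fin N), ⟪gradX φ a b, h⟫ = D (a,b) (h, 0) := by
    intro a b h
    rw [hgradX_eq, InnerProductSpace.toDual_symm_apply]
    simp [hc1]
  -- the convexity inequality
  have key_ineq : ∀ a b c d : EuclideanSpace ℝ (Fin N),
      φ a b + ⟪gradX φ a b, c - a⟫ + ⟪gradXi φ a b, d - b⟫ ≤ φ c d := by
    intro a b c d
    have h1 := aux_convexOn_fderiv_le hconv ((hΦd (a,b)).hasFDerivAt) (b := (c,d))
    have h2 : ((c,d) - (a,b) : (EuclideanSpace ℝ (Fin N)) × (EuclideanSpace ℝ (Fin N)))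
        = (c - a, d - b) := rfl
    have h3 : ((c - a, d - b) : (EuclideanSpace ℝ (Fin N)) × (EuclideanSpace ℝ (Fin N)))
        = (c - a, 0) + (0, d - b) := by simp
    rw [h2, h3, map_add] at h1
    rw [hinnerX, hinnerXi]
    have hDf : fderiv ℝ Φ (a, b) = D (a,b) := rfl
    calc φ a b + D (a,b) (c - a, 0) + D (a,b) (0, d - b)
        = Φ (a,b) + (fderiv ℝ Φ (a,b) (c - a, 0) + fderiv ℝ Φ (a,b) (0, d - b)) := by
          rw [hDf]; ring
      _ ≤ Φ (c,d) := h1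
      _ = φ c d := rfl
  -- the gradient-in-ξ map and its derivatives
  set G : (EuclideanSpace ℝ (Fin N)) × (EuclideanSpace ℝ (Fin N)) → EuclideanSpace ℝ (Fin N) :=
    fun q => (InnerProductSpace.toDual ℝ _).symm ((D q).comp c0) with hGdef
  have hGeq : ∀ a b : EuclideanSpace ℝ (Fin N), G (a,b) = gradXi φ a b := by
    intro a b
    rw [hgradXi_eq]
  have hGc : ContDiff ℝ 1 G := by
    have h1 : ContDiff ℝ 1 (fun q : (EuclideanSpace ℝ (Fin N)) × (EuclideanSpace ℝ (Fin N)) =>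
        (D q).comp c0) := hD1.clm_comp contDiff_const
    exact ((InnerProductSpace.toDual ℝ
      (EuclideanSpace ℝ (Fin N))).symm.contDiff).comp h1
  have hGd : Differentiable ℝ G := hGc.differentiable one_ne_zero
  have hhessXiXi_eq : ∀ a b k : EuclideanSpace ℝ (Fin N),
      hessXiXi φ a b k = fderiv ℝ G (a,b) (0, k) := by
    intro a b k
    have h2 : HasFDerivAt (fun ξ => ((a, ξ) :
        (EuclideanSpace ℝ (Fin N)) × (EuclideanSpace ℝ (Fin N)))) c0 b :=
      (hasFDerivAt_const a b).prodMk (hasFDerivAt_id b)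
    have hcomp : HasFDerivAt (fun ξ' => G (a, ξ')) ((fderiv ℝ G (a,b)).comp c0) b :=
      ((hGd (a,b)).hasFDerivAt).comp b h2
    have hfun : (fun ξ' => gradient (φ a) ξ') = fun ξ' => G (a, ξ') := by
      funext ξ'
      rw [hGeq a ξ', gradXi]
    rw [hessXiXi, hfun, hcomp.fderiv]
    simp [hc0]
  have hhessXiX_eq : ∀ a b h : EuclideanSpace ℝ (Fin N),
      hessXiX φ a b h = fderiv ℝ G (a,b) (h, 0) := by
    intro a b h
    have h2 : HasFDerivAt (fun a' => ((a', b) :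
        (EuclideanSpace ℝ (Fin N)) × (EuclideanSpace ℝ (Fin N)))) c1 a :=
      (hasFDerivAt_id a).prodMk (hasFDerivAt_const b a)
    have hcomp : HasFDerivAt (fun a' => G (a', b)) ((fderiv ℝ G (a,b)).comp c1) a := by
      have := ((hGd (a,b)).hasFDerivAt).comp a h2; exact this
    have hfun : (fun a' => gradient (φ a') b) = fun a' => G (a', b) := by
      funext a'
      rw [hGeq a' b, gradXi]
    rw [hessXiX, hfun, hcomp.fderiv]
    simp [hc1]
  -- invertibility of the Hessian block
  have hUnit : ∀ a b : EuclideanSpace ℝ (Fin N), IsUnit (hessXiXi φ a b) := by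
    intro a b
    set A := hessXiXi φ a b with hA
    have hinj : Function.Injective A := by
      intro u u' huu
      by_contra hne
      have hne' : u - u' ≠ 0 := sub_ne_zero.mpr hne
      have h1 : A (u - u') = 0 := by rw [map_sub, huu, sub_self]
      have h2 := hpos a b (u - u') hne'
      rw [← hA, h1] at h2
      simp at h2
    have hsurj : Function.Surjective A := by
      have := (LinearMap.injective_iff_surjective
        (f := (A : EuclideanSpace ℝ (Fin N) →ₗ[ℝ] EuclideanSpace ℝ (Fin N)))).mp hinj
      exact this
    set e : EuclideanSpace ℝ (Fin N) ≃L[ℝ] EuclideanSpace ℝ (Fin N) :=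
      (LinearEquiv.ofBijective (A : EuclideanSpace ℝ (Fin N) →ₗ[ℝ] EuclideanSpace ℝ (Fin N))
        ⟨hinj, hsurj⟩).toContinuousLinearEquiv with he
    have heapp : ∀ u, e u = A u := fun u => rfl
    refine ⟨⟨A, (e.symm : EuclideanSpace ℝ (Fin N) →L[ℝ] EuclideanSpace ℝ (Fin N)), ?_, ?_⟩, rfl⟩
    · refine ContinuousLinearMap.ext fun u => ?_
      have h3 : A ((e.symm : EuclideanSpace ℝ (Fin N) →L[ℝ] EuclideanSpace ℝ (Fin N)) u)
          = e (e.symm u) := (heapp _).symm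
      simpa [ContinuousLinearMap.mul_apply] using h3.trans (e.apply_symm_apply u)
    · refine ContinuousLinearMap.ext fun u => ?_
      have h3 : (e.symm : EuclideanSpace ℝ (Fin N) →L[ℝ] EuclideanSpace ℝ (Fin N)) (A u)
          = e.symm (e u) := by rw [heapp]; rfl
      simpa [ContinuousLinearMap.mul_apply] using h3.trans (e.symm_apply_apply u)
  have hAinv : ∀ (a b : EuclideanSpace ℝ (Fin N)) (k : EuclideanSpace ℝ (Fin N)),
      hessXiXi φ a b (Ring.inverse (hessXiXi φ a b) k) = k := by
    intro a b k
    have h1 : hessXiXi φ a b * Ring.inverse (hessXiXi φ a b) = 1 :=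
      Ring.mul_inverse_cancel _ (hUnit a b)
    calc hessXiXi φ a b (Ring.inverse (hessXiXi φ a b) k)
        = (hessXiXi φ a b * Ring.inverse (hessXiXi φ a b)) k :=
          (ContinuousLinearMap.mul_apply _ _ _).symm
      _ = k := by rw [h1]; rfl
  -- the trajectory and its velocity
  have hsub : Icc t T ⊆ Icc (0:ℝ) T := Icc_subset_Icc h0t le_rfl
  have hxc : ContinuousOn x (Icc t T) := fun s hs =>
    (hxode s hs).differentiableWithinAt.continuousWithinAt
  set Ξ : ℝ → EuclideanSpace ℝ (Fin N) := fun s => v s (x s) with hΞdef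
  have hvc : ContinuousOn (fun q : ℝ × EuclideanSpace ℝ (Fin N) => v q.1 q.2)
      (Icc 0 T ×ˢ univ) := hv.continuousOn
  have hΞc : ContinuousOn Ξ (Icc t T) := by
    refine hvc.comp (continuousOn_id.prodMk hxc) ?_
    intro s hs
    exact ⟨hsub hs, mem_univ _⟩
  set p : ℝ → EuclideanSpace ℝ (Fin N) := fun s => G (x s, Ξ s) with hpdef
  have hpc : ContinuousOn p (Icc t T) := hGc.continuous.comp_continuousOn (hxc.prodMk hΞc)
  set qt : ℝ → EuclideanSpace ℝ (Fin N) := fun s => gradX φ (x s) (Ξ s) with hqtdef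
  have hqtc : ContinuousOn qt (Icc t T) := by
    have hcont : Continuous (fun q : (EuclideanSpace ℝ (Fin N)) × (EuclideanSpace ℝ (Fin N)) =>
        (InnerProductSpace.toDual ℝ (EuclideanSpace ℝ (Fin N))).symm ((D q).comp c1)) := by
      have h1 : Continuous (fun q : (EuclideanSpace ℝ (Fin N)) × (EuclideanSpace ℝ (Fin N)) =>
          (D q).comp c1) := (hD1.clm_comp contDiff_const).continuous
      exact ((InnerProductSpace.toDual ℝ
        (EuclideanSpace ℝ (Fin N))).symm.continuous).comp h1
    have heq : qt = (fun q : (EuclideanSpace ℝ (Fin N)) × (EuclideanSpace ℝ (Fin N)) =>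
        (InnerProductSpace.toDual ℝ (EuclideanSpace ℝ (Fin N))).symm ((D q).comp c1))
        ∘ (fun s => (x s, Ξ s)) := by
      funext s
      simp only [hqtdef, Function.comp_apply, hgradX_eq]
    rw [heq]
    exact hcont.comp_continuousOn (hxc.prodMk hΞc)
  set Q : ℝ → EuclideanSpace ℝ (Fin N) := fun s =>
    Ring.inverse (hessXiXi φ (x s) (Ξ s)) (hessXiX φ (x s) (Ξ s) (Ξ s) - gradX φ (x s) (Ξ s))
    with hQdef
  -- derivative of Ξ along the flow
  have hΞd : ∀ s ∈ Ioo t T, HasDerivWithinAt Ξ (-(Q s)) (Icc t T) s := by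
    intro s hs
    have hs' : s ∈ Icc t T := Ioo_subset_Icc_self hs
    have hs0T : s ∈ Ioo (0:ℝ) T := ⟨lt_of_le_of_lt h0t hs.1, hs.2⟩
    have hmem : (Icc 0 T ×ˢ (univ : Set (EuclideanSpace ℝ (Fin N))) :
        Set (ℝ × EuclideanSpace ℝ (Fin N))) ∈ nhds (s, x s) := by
      refine mem_nhds_iff.mpr ⟨Ioo 0 T ×ˢ univ, ?_, isOpen_Ioo.prod isOpen_univ,
        ⟨hs0T, mem_univ _⟩⟩
      exact prod_mono Ioo_subset_Icc_self (subset_refl _)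
    have hVd : DifferentiableAt ℝ (fun q : ℝ × EuclideanSpace ℝ (Fin N) => v q.1 q.2)
        (s, x s) := (hv.contDiffAt hmem).differentiableAt one_ne_zero
    set LV := fderiv ℝ (fun q : ℝ × EuclideanSpace ℝ (Fin N) => v q.1 q.2) (s, x s) with hLV
    have hpair : HasDerivWithinAt (fun σ => ((σ, x σ) : ℝ × EuclideanSpace ℝ (Fin N)))
        ((1:ℝ), Ξ s) (Icc t T) s :=
      (hasDerivWithinAt_id s (Icc t T)).prodMk (hxode s hs')
    have hΞd0 : HasDerivWithinAt Ξ (LV (1, Ξ s)) (Icc t T) s :=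
      by have := hVd.hasFDerivAt.comp_hasDerivWithinAt s hpair; exact this
    have hpair2 : HasDerivAt (fun τ => ((τ, x s) : ℝ × EuclideanSpace ℝ (Fin N))) (1, 0) s :=
      (hasDerivAt_id s).prodMk (hasDerivAt_const s (x s))
    have hτ : HasDerivAt (fun τ => v τ (x s)) (LV (1, 0)) s :=
      by have := hVd.hasFDerivAt.comp_hasDerivAt s hpair2; exact this
    have hLV10 : LV (1, 0) = -(fderiv ℝ (v s) (x s) (v s (x s)) + Q s) := by
      have := hPDE s hs0T (x s)
      exact hτ.unique this
    have hpair3 : HasFDerivAt (fun ξ => ((s, ξ) : ℝ × EuclideanSpace ℝ (Fin N)))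
        ((0 : EuclideanSpace ℝ (Fin N) →L[ℝ] ℝ).prod (ContinuousLinearMap.id ℝ _)) (x s) :=
      (hasFDerivAt_const s (x s)).prodMk (hasFDerivAt_id (x s))
    have hsp : HasFDerivAt (v s)
        (LV.comp ((0 : EuclideanSpace ℝ (Fin N) →L[ℝ] ℝ).prod (ContinuousLinearMap.id ℝ _)))
        (x s) := hVd.hasFDerivAt.comp (x s) hpair3
    have hfd : fderiv ℝ (v s) (x s) (v s (x s)) = LV (0, Ξ s) := by
      rw [hsp.fderiv]
      simp [hΞdef]
    have hsplit : LV (1, Ξ s) = LV (1, 0) + LV (0, Ξ s) := by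
      rw [← map_add]
      norm_num
    have : LV (1, Ξ s) = -(Q s) := by
      rw [hsplit, hLV10, hfd]
      abel
    rwa [this] at hΞd0
  -- derivative of p along the flow
  have hpd : ∀ s ∈ Ioo t T, HasDerivWithinAt p (qt s) (Icc t T) s := by
    intro s hs
    have hs' : s ∈ Icc t T := Ioo_subset_Icc_self hs
    have hqpair : HasDerivWithinAt
        (fun σ => ((x σ, Ξ σ) : (EuclideanSpace ℝ (Fin N)) × (EuclideanSpace ℝ (Fin N))))
        (Ξ s, -(Q s)) (Icc t T) s := (hxode s hs').prodMk (hΞd s hs)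
    have h1 : HasDerivWithinAt p (fderiv ℝ G (x s, Ξ s) (Ξ s, -(Q s))) (Icc t T) s :=
      by have := (hGd (x s, Ξ s)).hasFDerivAt.comp_hasDerivWithinAt s hqpair; exact this
    have h2 : fderiv ℝ G (x s, Ξ s) (Ξ s, -(Q s)) = qt s := by
      have hsplit : ((Ξ s, -(Q s)) :
          (EuclideanSpace ℝ (Fin N)) × (EuclideanSpace ℝ (Fin N)))
          = (Ξ s, 0) + -((0, Q s)) := by
        simp [Prod.ext_iff]
      rw [hsplit, map_add, map_neg, ← hhessXiX_eq, ← hhessXiXi_eq, hAinv]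
      simp [hqtdef]
    rwa [h2] at h1
  -- terminal condition
  have hpT : p T = 0 := by
    rw [hpdef]
    simp only []
    rw [hGeq (x T) (Ξ T)]
    exact hterm (x T)
  -- interval integrability of continuous data
  have huIcc : uIcc t T = Icc t T := uIcc_of_le htT'
  have hΞint : IntervalIntegrable Ξ volume t T := by
    apply ContinuousOn.intervalIntegrable
    rwa [huIcc]
  have hqtint : IntervalIntegrable qt volume t T := by
    apply ContinuousOn.intervalIntegrable
    rwa [huIcc]
  have hmono_uIcc : ∀ s ∈ Icc t T, uIcc t s ⊆ uIcc t T := by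
    intro s hs
    rw [huIcc, uIcc_of_le hs.1]
    exact Icc_subset_Icc le_rfl hs.2
  -- FTC for the trajectory
  have hxeq : ∀ s ∈ Icc t T, x s = y + ∫ r in t..s, Ξ r := by
    intro s hs
    have h := intervalIntegral.integral_eq_sub_of_hasDeriv_right_of_le hs.1
      (hxc.mono (Icc_subset_Icc le_rfl hs.2))
      (fun r hr => ((hxode r ⟨hr.1.le, hr.2.le.trans hs.2⟩).mono_of_mem_nhdsWithin
        (Icc_mem_nhdsGT_of_mem ⟨hr.1.le, lt_of_lt_of_le hr.2 hs.2⟩)))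
      (hΞint.mono_set (hmono_uIcc s hs))
    rw [h, ← hxt]
    abel
  -- FTC for the costate
  have hpeq : ∀ s ∈ Icc t T, p s = -∫ r in s..T, qt r := by
    intro s hs
    have h := intervalIntegral.integral_eq_sub_of_hasDeriv_right_of_le hs.2
      (hpc.mono (Icc_subset_Icc hs.1 le_rfl))
      (fun r hr => ((hpd r ⟨lt_of_le_of_lt hs.1 hr.1, hr.2⟩).mono_of_mem_nhdsWithin
        (Icc_mem_nhdsGT_of_mem ⟨hs.1.trans hr.1.le, hr.2⟩)))
      (by
        apply hqtint.mono_set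
        rw [huIcc, uIcc_of_le hs.2]
        exact Icc_subset_Icc hs.1 le_rfl)
    rw [h, hpT]
    abel
  -- the difference path
  have hzx : ∀ s ∈ Icc t T, z s - x s = ∫ r in t..s, (w r - Ξ r) := by
    intro s hs
    rw [hz s hs, hxeq s hs,
      intervalIntegral.integral_sub (hw.mono_set (hmono_uIcc s hs))
        (hΞint.mono_set (hmono_uIcc s hs))]
    abel
  -- continuity of z on [t, T]
  have hzc : ContinuousOn z (Icc t T) := by
    have h1 : ContinuousOn (fun s => y + ∫ r in t..s, w r) (Icc t T) := by
      refine continuousOn_const.add ?_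
      have := intervalIntegral.continuousOn_primitive_interval' hw left_mem_uIcc
      rwa [huIcc] at this
    exact h1.congr (fun s hs => hz s hs)
  -- the comparison integrand
  set u : ℝ → EuclideanSpace ℝ (Fin N) := fun s => w s - Ξ s with hudef
  have hu_int : IntervalIntegrable u volume t T := hw.sub hΞint
  have huI : IntegrableOn u (Ioc t T) :=
    (intervalIntegrable_iff_integrableOn_Ioc_of_le htT').mp hu_int
  set m : ℝ → ℝ := fun s => φ (x s) (Ξ s) + (⟪qt s, z s - x s⟫ + ⟪p s, u s⟫) with hmdef
  -- integrability of the pieces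
  have hint1 : IntervalIntegrable (fun s => φ (x s) (Ξ s)) volume t T := by
    apply ContinuousOn.intervalIntegrable
    rw [huIcc]
    exact hφ.continuous.comp_continuousOn (hxc.prodMk hΞc)
  have hint2 : IntervalIntegrable (fun s => ⟪qt s, z s - x s⟫) volume t T := by
    apply ContinuousOn.intervalIntegrable
    rw [huIcc]
    exact hqtc.inner (hzc.sub hxc)
  have hint3 : IntervalIntegrable (fun s => ⟪p s, u s⟫) volume t T := by
    have hsplit : (fun s => ⟪p s, u s⟫) = fun s => ⟪p s, w s⟫ - ⟪p s, Ξ s⟫ := by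
      funext s
      rw [hudef]
      simp [inner_sub_right]
    rw [hsplit]
    have hint3b : IntervalIntegrable (fun s => ⟪p s, Ξ s⟫) volume t T := by
      apply ContinuousOn.intervalIntegrable
      rw [huIcc]
      exact hpc.inner hΞc
    have hint3a : IntervalIntegrable (fun s => ⟪p s, w s⟫) volume t T := by
      rw [intervalIntegrable_iff_integrableOn_Ioc_of_le htT']
      obtain ⟨Cp, hCp⟩ := isCompact_Icc.exists_bound_of_continuousOn hpc
      have hwI : IntegrableOn w (Ioc t T) :=
        (intervalIntegrable_iff_integrableOn_Ioc_of_le htT').mp hw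
      have hm1 : AEStronglyMeasurable (fun s => ⟪p s, w s⟫) (volume.restrict (Ioc t T)) :=
        AEStronglyMeasurable.inner
          ((hpc.mono Ioc_subset_Icc_self).aestronglyMeasurable measurableSet_Ioc)
          hwI.aestronglyMeasurable
      refine Integrable.mono' (hwI.norm.const_mul |Cp|) hm1 ?_
      filter_upwards [ae_restrict_mem measurableSet_Ioc] with s hs
      have h1 : ‖(⟪p s, w s⟫ : ℝ)‖ ≤ ‖p s‖ * ‖w s‖ := norm_inner_le_norm _ _
      refine h1.trans ?_
      exact mul_le_mul_of_nonneg_right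
        ((hCp s (Ioc_subset_Icc_self hs)).trans (le_abs_self Cp)) (norm_nonneg _)
    exact hint3a.sub hint3b
  have hm_int : IntervalIntegrable m volume t T := hint1.add (hint2.add hint3)
  -- the pointwise inequality
  have hptwise : ∀ s ∈ Icc t T, m s ≤ φ (z s) (w s) := by
    intro s hs
    have h1 := key_ineq (x s) (Ξ s) (z s) (w s)
    have h2 : p s = gradXi φ (x s) (Ξ s) := hGeq (x s) (Ξ s)
    have h3 : qt s = gradX φ (x s) (Ξ s) := rfl
    rw [hmdef]
    simp only [hudef]
    rw [h2, h3]
    linarith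
  -- the zero-sum identity
  have hzero : (∫ s in t..T, ⟪qt s, z s - x s⟫) + (∫ s in t..T, ⟪p s, u s⟫) = 0 := by
    set proj : ℝ → ℝ := fun r => max t (min r T) with hprojdef
    have hprojc : Continuous proj := continuous_const.max (continuous_id.min continuous_const)
    have hprojmem : ∀ r, proj r ∈ Icc t T := fun r =>
      ⟨le_max_left _ _, max_le htT' (min_le_right r T)⟩
    set fbar : ℝ → EuclideanSpace ℝ (Fin N) := fun r => qt (proj r) with hfbardef
    have hfbarc : Continuous fbar := hqtc.comp_continuous hprojc hprojmem
    have hfbar_eq : ∀ r ∈ Icc t T, fbar r = qt r := by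
      intro r hr
      rw [hfbardef]
      simp only [hprojdef]
      rw [min_eq_left hr.2, max_eq_right hr.1]
    have hstepA : ∫ s in Ioc t T, ⟪p s, u s⟫
        = -∫ s in Ioc t T, ⟪(∫ r in Ioc s T, fbar r), u s⟫ := by
      rw [← integral_neg]
      refine setIntegral_congr_fun measurableSet_Ioc ?_
      intro s hs
      have h1 : p s = -∫ r in s..T, qt r := hpeq s (Ioc_subset_Icc_self hs)
      have h2 : (∫ r in s..T, qt r) = ∫ r in Ioc s T, qt r :=
        intervalIntegral.integral_of_le hs.2
      have h3 : (∫ r in Ioc s T, qt r) = ∫ r in Ioc s T, fbar r := by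
        refine setIntegral_congr_fun measurableSet_Ioc ?_
        intro r hr
        exact (hfbar_eq r ⟨(hs.1.le).trans hr.1.le, hr.2⟩).symm
      show ⟪p s, u s⟫ = -⟪(∫ r in Ioc s T, fbar r), u s⟫
      rw [← h3, ← h2, ← inner_neg_left, ← h1]
    have hstepC : ∫ s in Ioc t T, ⟪(∫ r in Ioc s T, fbar r), u s⟫
        = ∫ r in Ioc t T, ⟪fbar r, ∫ s in Ioc t r, u s⟫ :=
      aux_triangle_swap hfbarc huI
    have hstepD : ∫ r in Ioc t T, ⟪fbar r, ∫ s in Ioc t r, u s⟫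
        = ∫ r in Ioc t T, ⟪qt r, z r - x r⟫ := by
      refine setIntegral_congr_fun measurableSet_Ioc ?_
      intro r hr
      have h1 : (∫ s in Ioc t r, u s) = ∫ s in t..r, u s :=
        (intervalIntegral.integral_of_le hr.1.le).symm
      show ⟪fbar r, (∫ s in Ioc t r, u s)⟫ = ⟪qt r, z r - x r⟫
      rw [h1, hfbar_eq r (Ioc_subset_Icc_self hr), ← hzx r (Ioc_subset_Icc_self hr)]
    rw [intervalIntegral.integral_of_le htT', intervalIntegral.integral_of_le htT',
      hstepA, hstepC, hstepD]
    abel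
  -- conclusion
  have hmono := intervalIntegral.integral_mono_on htT' hm_int hzwint hptwise
  have hadd : ∫ s in t..T, m s = (∫ s in t..T, φ (x s) (Ξ s))
      + ((∫ s in t..T, ⟪qt s, z s - x s⟫) + (∫ s in t..T, ⟪p s, u s⟫)) := by
    rw [hmdef, intervalIntegral.integral_add hint1 (hint2.add hint3),
      intervalIntegral.integral_add hint2 hint3]
  have hfinal : (∫ s in t..T, φ (x s) (v s (x s))) = ∫ s in t..T, φ (x s) (Ξ s) := rfl
  rw [hfinal]
  rw [hadd, hzero, add_zero] at hmono
  exact hmono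
end
end

section
/- Let p : [0,T]×ℝ^N → ℝ^N be C¹ with p(T,x) = 0 for all x, solving the linear transport system p_t(t,x) + ∇p(t,x) f(x,u(t,x)) + ∇_x[f(x,u(t,x))]ᵀ p(t,x) = ∇_x[F(x,u(t,x))] on [0,T]×ℝ^N. If F_u(x,u(t,x)) − f_u(x,u(t,x))ᵀ p(t,x) = 0 for all (t,x) ∈ [0,T]×ℝ^N, then for every (t,y) ∈ [0,T)×ℝ^N and every C¹ variation U : [0,T]×ℝ^N → ℝ^m, the first variation δI(u;U;t,y) equals 0. -/
open MeasureTheory Set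
open scoped RealInnerProductSpace

noncomputable section

section Aux

variable {E G : Type*} [NormedAddCommGroup E] [NormedSpace ℝ E]
  [NormedAddCommGroup G] [NormedSpace ℝ G]

theorem aux_slice_space {T : ℝ} (P : ℝ × E → G)
    (hP : ContDiffOn ℝ 1 P (Icc 0 T ×ˢ (univ : Set E))) {s : ℝ} (hs : s ∈ Icc (0:ℝ) T) (z : E) :
    HasFDerivAt (fun z' => P (s, z'))
      ((fderivWithin ℝ P (Icc 0 T ×ˢ univ) (s, z)).comp (ContinuousLinearMap.inr ℝ ℝ E)) z := by
  have hdiff := (hP.differentiableOn one_ne_zero (s, z) ⟨hs, mem_univ z⟩).hasFDerivWithinAt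
  have hj : HasFDerivAt (fun z' : E => ((s, z') : ℝ × E)) (ContinuousLinearMap.inr ℝ ℝ E) z :=
    hasFDerivAt_prodMk_right s z
  have := hdiff.comp z (hj.hasFDerivWithinAt (s := (univ : Set E))) (fun z' _ => ⟨hs, mem_univ _⟩)
  exact hasFDerivWithinAt_univ.mp this

theorem aux_slice_time {T : ℝ} (P : ℝ × E → G)
    (hP : ContDiffOn ℝ 1 P (Icc 0 T ×ˢ (univ : Set E))) {s : ℝ} (hs : s ∈ Icc (0:ℝ) T) (z : E) :
    HasDerivWithinAt (fun τ => P (τ, z))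
      (fderivWithin ℝ P (Icc 0 T ×ˢ univ) (s, z) (1, 0)) (Icc 0 T) s := by
  have hdiff := (hP.differentiableOn one_ne_zero (s, z) ⟨hs, mem_univ z⟩).hasFDerivWithinAt
  have hj : HasDerivWithinAt (fun τ : ℝ => ((τ, z) : ℝ × E)) ((1:ℝ), (0:E)) (Icc 0 T) s :=
    (hasDerivWithinAt_id s _).prodMk (hasDerivWithinAt_const s _ z)
  exact hdiff.comp_hasDerivWithinAt (x := s) hj (fun τ hτ => mk_mem_prod hτ (mem_univ _))

end Aux

theorem stmt_8 {N m : ℕ} (T : ℝ) (hT : 0 < T)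
    (F : EuclideanSpace ℝ (Fin N) → EuclideanSpace ℝ (Fin m) → ℝ)
    (f : EuclideanSpace ℝ (Fin N) → EuclideanSpace ℝ (Fin m) → EuclideanSpace ℝ (Fin N))
    (hF : ContDiff ℝ 1 fun q : EuclideanSpace ℝ (Fin N) × EuclideanSpace ℝ (Fin m) => F q.1 q.2)
    (hf : ContDiff ℝ 1 fun q : EuclideanSpace ℝ (Fin N) × EuclideanSpace ℝ (Fin m) => f q.1 q.2)
    -- the C¹ feedback field u on [0,T] × ℝ^N
    (u : ℝ → EuclideanSpace ℝ (Fin N) → EuclideanSpace ℝ (Fin m))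
    (hu : ContDiffOn ℝ 1 (fun q : ℝ × EuclideanSpace ℝ (Fin N) => u q.1 q.2)
      (Icc 0 T ×ˢ Set.univ))
    -- the C¹ costate p on [0,T] × ℝ^N with p(T,·) = 0
    (p : ℝ → EuclideanSpace ℝ (Fin N) → EuclideanSpace ℝ (Fin N))
    (hp : ContDiffOn ℝ 1 (fun q : ℝ × EuclideanSpace ℝ (Fin N) => p q.1 q.2)
      (Icc 0 T ×ˢ Set.univ))
    (hpT : ∀ x, p T x = 0)
    -- the linear transport system:
    -- p_t + ∇p f(x,u) + ∇ₓ[f(x,u(t,x))]ᵀ p = ∇ₓ[F(x,u(t,x))] on [0,T] × ℝ^N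
    (hPDE : ∀ t ∈ Icc (0:ℝ) T, ∀ x : EuclideanSpace ℝ (Fin N),
      HasDerivWithinAt (fun τ => p τ x)
        (gradient (fun x' => F x' (u t x')) x
          - fderiv ℝ (p t) x (f x (u t x))
          - ContinuousLinearMap.adjoint (fderiv ℝ (fun x' => f x' (u t x')) x) (p t x))
        (Icc 0 T) t)
    -- the stationarity condition F_u(x,u(t,x)) − f_u(x,u(t,x))ᵀ p(t,x) = 0 everywhere
    (hstat : ∀ t ∈ Icc (0:ℝ) T, ∀ x : EuclideanSpace ℝ (Fin N),
      gradient (F x) (u t x)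
        - ContinuousLinearMap.adjoint (fderiv ℝ (f x) (u t x)) (p t x) = 0)
    -- initial data and associated state trajectory
    (t : ℝ) (ht : t ∈ Ico 0 T) (y : EuclideanSpace ℝ (Fin N))
    (x : ℝ → EuclideanSpace ℝ (Fin N)) (hxt : x t = y)
    (hx : ∀ s ∈ Icc t T, HasDerivWithinAt x (f (x s) (u s (x s))) (Icc t T) s)
    -- a C¹ variation U and the linearized state X
    (U : ℝ → EuclideanSpace ℝ (Fin N) → EuclideanSpace ℝ (Fin m))
    (hU : ContDiffOn ℝ 1 (fun q : ℝ × EuclideanSpace ℝ (Fin N) => U q.1 q.2)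
      (Icc 0 T ×ˢ Set.univ))
    (X : ℝ → EuclideanSpace ℝ (Fin N)) (hXt : X t = 0)
    (hX : ∀ s ∈ Icc t T, HasDerivWithinAt X
      (fderiv ℝ (fun x' => f x' (u s x')) (x s) (X s)
        + fderiv ℝ (f (x s)) (u s (x s)) (U s (x s))) (Icc t T) s) :
    -- conclusion: the first variation of the cost vanishes
    (∫ s in t..T,
      (⟪gradient (fun x' => F x' (u s x')) (x s), X s⟫
        + ⟪gradient (F (x s)) (u s (x s)), U s (x s)⟫)) = 0 := by
  have htT : t ≤ T := le_of_lt ht.2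
  have hsub : Icc t T ⊆ Icc (0:ℝ) T := Icc_subset_Icc ht.1 le_rfl
  -- the spatial derivative of p s
  have hpspace : ∀ s ∈ Icc t T,
      fderiv ℝ (p s) (x s) = (fderivWithin ℝ (fun q : ℝ × EuclideanSpace ℝ (Fin N) => p q.1 q.2)
        (Icc 0 T ×ˢ univ) (s, x s)).comp (ContinuousLinearMap.inr ℝ ℝ _) :=
    fun s hs => (aux_slice_space _ hp (hsub hs) (x s)).fderiv
  -- the time derivative of p · (x s)
  have htime : ∀ s ∈ Icc t T,
      fderivWithin ℝ (fun q : ℝ × EuclideanSpace ℝ (Fin N) => p q.1 q.2)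
        (Icc 0 T ×ˢ univ) (s, x s) (1, 0) =
      gradient (fun x' => F x' (u s x')) (x s)
        - fderiv ℝ (p s) (x s) (f (x s) (u s (x s)))
        - ContinuousLinearMap.adjoint (fderiv ℝ (fun x' => f x' (u s x')) (x s))
            (p s (x s)) := by
    intro s hs
    have h1 := (aux_slice_time _ hp (hsub hs) (x s)).derivWithin
      ((uniqueDiffOn_Icc hT) s (hsub hs))
    have h2 := (hPDE s (hsub hs) (x s)).derivWithin ((uniqueDiffOn_Icc hT) s (hsub hs))
    rw [← h1, ← h2]
  -- derivative of p along the trajectory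
  have hdP : ∀ s ∈ Icc t T,
      HasDerivWithinAt (fun τ => p τ (x τ))
        (gradient (fun x' => F x' (u s x')) (x s)
          - ContinuousLinearMap.adjoint (fderiv ℝ (fun x' => f x' (u s x')) (x s))
              (p s (x s))) (Icc t T) s := by
    intro s hs
    have hdiff := (hp.differentiableOn one_ne_zero (s, x s) ⟨hsub hs, mem_univ _⟩).hasFDerivWithinAt
    have hj : HasDerivWithinAt (fun τ : ℝ => ((τ, x τ) : ℝ × EuclideanSpace ℝ (Fin N)))
        ((1:ℝ), f (x s) (u s (x s))) (Icc t T) s :=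
      (hasDerivWithinAt_id s _).prodMk (hx s hs)
    have hcomp := hdiff.comp_hasDerivWithinAt (x := s) hj (fun τ hτ => mk_mem_prod (hsub hτ) (mem_univ _))
    have hval : fderivWithin ℝ (fun q : ℝ × EuclideanSpace ℝ (Fin N) => p q.1 q.2)
          (Icc 0 T ×ˢ univ) (s, x s) ((1:ℝ), f (x s) (u s (x s)))
        = gradient (fun x' => F x' (u s x')) (x s)
          - ContinuousLinearMap.adjoint (fderiv ℝ (fun x' => f x' (u s x')) (x s))
              (p s (x s)) := by
      have hsplit : ((1:ℝ), f (x s) (u s (x s)))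
          = ((1:ℝ), (0:EuclideanSpace ℝ (Fin N))) + ((0:ℝ), f (x s) (u s (x s))) := by simp
      rw [hsplit, map_add, htime s hs]
      have h0 : fderivWithin ℝ (fun q : ℝ × EuclideanSpace ℝ (Fin N) => p q.1 q.2)
            (Icc 0 T ×ˢ univ) (s, x s) ((0:ℝ), f (x s) (u s (x s)))
          = fderiv ℝ (p s) (x s) (f (x s) (u s (x s))) := by
        rw [hpspace s hs]; rfl
      rw [h0]; abel
    rw [← hval]
    exact hcomp
  -- derivative of g s = ⟪p s (x s), X s⟫
  have hg : ∀ s ∈ Icc t T, HasDerivWithinAt (fun s => ⟪p s (x s), X s⟫)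
      (⟪gradient (fun x' => F x' (u s x')) (x s), X s⟫
        + ⟪gradient (F (x s)) (u s (x s)), U s (x s)⟫) (Icc t T) s := by
    intro s hs
    have h := (hdP s hs).inner ℝ (hX s hs)
    have heq : (⟪p s (x s),
          fderiv ℝ (fun x' => f x' (u s x')) (x s) (X s)
            + fderiv ℝ (f (x s)) (u s (x s)) (U s (x s))⟫
        + ⟪gradient (fun x' => F x' (u s x')) (x s)
            - ContinuousLinearMap.adjoint (fderiv ℝ (fun x' => f x' (u s x')) (x s))
                (p s (x s)), X s⟫)
        = ⟪gradient (fun x' => F x' (u s x')) (x s), X s⟫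
            + ⟪gradient (F (x s)) (u s (x s)), U s (x s)⟫ := by
      have hgradF : gradient (F (x s)) (u s (x s))
          = ContinuousLinearMap.adjoint (fderiv ℝ (f (x s)) (u s (x s))) (p s (x s)) :=
        sub_eq_zero.mp (hstat s (hsub hs) (x s))
      rw [hgradF]
      simp only [inner_add_right, inner_sub_left, ContinuousLinearMap.adjoint_inner_left]
      ring
    rw [← heq]
    exact h
  -- continuity facts
  have hxcont : ContinuousOn x (Icc t T) := fun s hs => (hx s hs).continuousWithinAt
  have hXcont : ContinuousOn X (Icc t T) := fun s hs => (hX s hs).continuousWithinAt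
  have hpair : ContinuousOn (fun s => ((s, x s) : ℝ × EuclideanSpace ℝ (Fin N))) (Icc t T) :=
    continuousOn_id.prodMk hxcont
  have hmaps : MapsTo (fun s => ((s, x s) : ℝ × EuclideanSpace ℝ (Fin N))) (Icc t T)
      (Icc 0 T ×ˢ univ) := fun s hs => ⟨hsub hs, mem_univ _⟩
  have hucont : ContinuousOn (fun s => u s (x s)) (Icc t T) :=
    hu.continuousOn.comp hpair hmaps
  have hUcont : ContinuousOn (fun s => U s (x s)) (Icc t T) :=
    hU.continuousOn.comp hpair hmaps
  have hq : ContinuousOn (fun s => ((x s, u s (x s)) :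
      EuclideanSpace ℝ (Fin N) × EuclideanSpace ℝ (Fin m))) (Icc t T) :=
    hxcont.prodMk hucont
  have hDFcont : Continuous (fderiv ℝ (fun q' : EuclideanSpace ℝ (Fin N) ×
      EuclideanSpace ℝ (Fin m) => F q'.1 q'.2)) := hF.continuous_fderiv one_ne_zero
  have hDucont : ContinuousOn (fun s => fderivWithin ℝ
      (fun q : ℝ × EuclideanSpace ℝ (Fin N) => u q.1 q.2) (Icc 0 T ×ˢ univ) (s, x s))
      (Icc t T) :=
    (hu.continuousOn_fderivWithin ((uniqueDiffOn_Icc hT).prod uniqueDiffOn_univ)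
      le_rfl).comp hpair hmaps
  -- rewrite the integrand
  have hφeq : ∀ s ∈ Icc t T,
      (⟪gradient (fun x' => F x' (u s x')) (x s), X s⟫
        + ⟪gradient (F (x s)) (u s (x s)), U s (x s)⟫)
      = fderiv ℝ (fun q' : EuclideanSpace ℝ (Fin N) × EuclideanSpace ℝ (Fin m) => F q'.1 q'.2)
          (x s, u s (x s))
          (X s, fderivWithin ℝ (fun q : ℝ × EuclideanSpace ℝ (Fin N) => u q.1 q.2)
            (Icc 0 T ×ˢ univ) (s, x s) (0, X s))
        + fderiv ℝ (fun q' : EuclideanSpace ℝ (Fin N) × EuclideanSpace ℝ (Fin m) => F q'.1 q'.2)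
          (x s, u s (x s)) (0, U s (x s)) := by
    intro s hs
    have hus : HasFDerivAt (u s)
        ((fderivWithin ℝ (fun q : ℝ × EuclideanSpace ℝ (Fin N) => u q.1 q.2)
          (Icc 0 T ×ˢ univ) (s, x s)).comp (ContinuousLinearMap.inr ℝ ℝ _)) (x s) :=
      aux_slice_space _ hu (hsub hs) (x s)
    have hFq : HasFDerivAt (fun q' : EuclideanSpace ℝ (Fin N) ×
        EuclideanSpace ℝ (Fin m) => F q'.1 q'.2)
        (fderiv ℝ (fun q' : EuclideanSpace ℝ (Fin N) × EuclideanSpace ℝ (Fin m) => F q'.1 q'.2)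
          (x s, u s (x s))) (x s, u s (x s)) :=
      ((hF.differentiable one_ne_zero) (x s, u s (x s))).hasFDerivAt
    have h1 : HasFDerivAt (fun x' => F x' (u s x'))
        ((fderiv ℝ (fun q' : EuclideanSpace ℝ (Fin N) × EuclideanSpace ℝ (Fin m) => F q'.1 q'.2)
          (x s, u s (x s))).comp ((ContinuousLinearMap.id ℝ _).prod
          ((fderivWithin ℝ (fun q : ℝ × EuclideanSpace ℝ (Fin N) => u q.1 q.2)
            (Icc 0 T ×ˢ univ) (s, x s)).comp (ContinuousLinearMap.inr ℝ ℝ _)))) (x s) :=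
      by
        have hpr : HasFDerivAt (fun x' => (x', u s x')) ((ContinuousLinearMap.id ℝ _).prod
            ((fderivWithin ℝ (fun q : ℝ × EuclideanSpace ℝ (Fin N) => u q.1 q.2)
              (Icc 0 T ×ˢ univ) (s, x s)).comp (ContinuousLinearMap.inr ℝ ℝ _))) (x s) :=
          (hasFDerivAt_id (x s)).prodMk hus
        exact hFq.comp (x s) hpr
    have h2 : HasFDerivAt (F (x s))
        ((fderiv ℝ (fun q' : EuclideanSpace ℝ (Fin N) × EuclideanSpace ℝ (Fin m) => F q'.1 q'.2)
          (x s, u s (x s))).comp (ContinuousLinearMap.inr ℝ (EuclideanSpace ℝ (Fin N))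
            (EuclideanSpace ℝ (Fin m)))) (u s (x s)) :=
      hFq.comp (u s (x s)) (hasFDerivAt_prodMk_right (𝕜 := ℝ) (x s) (u s (x s)))
    have e1 : ⟪gradient (fun x' => F x' (u s x')) (x s), X s⟫
        = fderiv ℝ (fun q' : EuclideanSpace ℝ (Fin N) × EuclideanSpace ℝ (Fin m) => F q'.1 q'.2)
          (x s, u s (x s))
          (X s, fderivWithin ℝ (fun q : ℝ × EuclideanSpace ℝ (Fin N) => u q.1 q.2)
            (Icc 0 T ×ˢ univ) (s, x s) (0, X s)) := by
      rw [gradient, InnerProductSpace.toDual_symm_apply, h1.fderiv]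
      rfl
    have e2 : ⟪gradient (F (x s)) (u s (x s)), U s (x s)⟫
        = fderiv ℝ (fun q' : EuclideanSpace ℝ (Fin N) × EuclideanSpace ℝ (Fin m) => F q'.1 q'.2)
          (x s, u s (x s)) (0, U s (x s)) := by
      rw [gradient, InnerProductSpace.toDual_symm_apply, h2.fderiv]
      rfl
    rw [e1, e2]
  -- continuity of the integrand
  have hφcont : ContinuousOn (fun s =>
      (⟪gradient (fun x' => F x' (u s x')) (x s), X s⟫
        + ⟪gradient (F (x s)) (u s (x s)), U s (x s)⟫)) (Icc t T) := by
    have hDFq : ContinuousOn (fun s => fderiv ℝ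
        (fun q' : EuclideanSpace ℝ (Fin N) × EuclideanSpace ℝ (Fin m) => F q'.1 q'.2)
        (x s, u s (x s))) (Icc t T) := hDFcont.comp_continuousOn hq
    have hduX : ContinuousOn (fun s => fderivWithin ℝ
        (fun q : ℝ × EuclideanSpace ℝ (Fin N) => u q.1 q.2) (Icc 0 T ×ˢ univ) (s, x s)
        ((0:ℝ), X s)) (Icc t T) :=
      hDucont.clm_apply (continuousOn_const.prodMk hXcont)
    have hc := (hDFq.clm_apply (hXcont.prodMk hduX)).add
      (hDFq.clm_apply ((continuousOn_const (c := (0 : EuclideanSpace ℝ (Fin N)))).prodMk hUcont))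
    exact ContinuousOn.congr hc hφeq
  -- integrability
  have hint : IntervalIntegrable (fun s =>
      (⟪gradient (fun x' => F x' (u s x')) (x s), X s⟫
        + ⟪gradient (F (x s)) (u s (x s)), U s (x s)⟫)) volume t T := by
    apply ContinuousOn.intervalIntegrable
    rwa [uIcc_of_le htT]
  have hgcont : ContinuousOn (fun s => ⟪p s (x s), X s⟫) (Icc t T) :=
    fun s hs => (hg s hs).continuousWithinAt
  have hderiv : ∀ s ∈ Ioo t T, HasDerivWithinAt (fun s => ⟪p s (x s), X s⟫)
      (⟪gradient (fun x' => F x' (u s x')) (x s), X s⟫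
        + ⟪gradient (F (x s)) (u s (x s)), U s (x s)⟫) (Ioi s) s :=
    fun s hs => ((hg s (Ioo_subset_Icc_self hs)).hasDerivAt
      (Icc_mem_nhds hs.1 hs.2)).hasDerivWithinAt
  have hmain := intervalIntegral.integral_eq_sub_of_hasDeriv_right_of_le htT hgcont hderiv hint
  rw [hmain, hpT, hxt, hXt]
  simp
end
end
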